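/- arXiv:2112.09364 — 5 statements merged into one kernel-verified Lean document; each statement's English description precedes it below -/
import Mathlib

section
/- Let j : ℝ^N → [0,∞] be measurable and even with ∫_{ℝ^N} min{1,|z|²} j(z) dz < ∞, ∫_{ℝ^N} j(z) dz = ∞, and ∫_{B_R(0)∖B_r(0)} j(z)² dz < ∞ for all 0 < r < R. Let Ω ⊂ ℝ^N be a bounded open set, let λ > 0, and let u ∈ 𝒟^j(Ω) satisfy b_j(u,v) = λ ∫_Ω u(x)v(x) dx for all v ∈ 𝒟^j(Ω) (i.e. u is a Dirichlet eigenfunction of the operator I_j in Ω with eigenvalue λ). Then u ∈ L^∞(Ω) and there is a constant C = C(Ω, j, λ) > 0 such that ‖u‖_{L^∞(Ω)} ≤ C ‖u‖_{L²(Ω)}. -/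
set_option maxHeartbeats 1000000


open MeasureTheory ENNReal Metric Set Filter

noncomputable section

abbrev Euc (N : ℕ) := EuclideanSpace ℝ (Fin N)

/-- A kernel of order `σ`. -/
def IsKernel (N : ℕ) (σ : ℝ) (k : Euc N → Euc N → ℝ) : Prop :=
  Measurable (fun p : Euc N × Euc N => k p.1 p.2) ∧
  (∀ x y, 0 ≤ k x y) ∧ (∀ x y, k x y = k y x) ∧
  ∃ C : ℝ, ∀ x, (∫⁻ y, ENNReal.ofReal (min 1 (‖x - y‖ ^ σ) * k x y)) ≤ ENNReal.ofReal C

/-- The quadratic form `b_{k,Ω}(u)` (valued in `[0,∞]`). -/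
def quadForm {N : ℕ} (k : Euc N → Euc N → ℝ) (Ω : Set (Euc N)) (u : Euc N → ℝ) : ℝ≥0∞ :=
  (1 / 2) * ∫⁻ x in Ω, ∫⁻ y in Ω, ENNReal.ofReal ((u x - u y) ^ 2 * k x y)

/-- The bilinear form `b_{k,Ω}(u,v)`. -/
def bForm {N : ℕ} (k : Euc N → Euc N → ℝ) (Ω : Set (Euc N)) (u v : Euc N → ℝ) : ℝ :=
  (1 / 2) * ∫ x in Ω, ∫ y in Ω, (u x - u y) * (v x - v y) * k x y

/-- The symmetric lower bound `j` of the kernel `k`. -/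
def symLB {N : ℕ} (k : Euc N → Euc N → ℝ) (z : Euc N) : ℝ :=
  essInf (fun x => min (k x (x + z)) (k x (x - z))) volume

/-- `u|_Ω ∈ D^k(Ω)`. -/
def MemDk {N : ℕ} (k : Euc N → Euc N → ℝ) (Ω : Set (Euc N)) (u : Euc N → ℝ) : Prop :=
  Measurable u ∧ MemLp u 2 (volume.restrict Ω) ∧ quadForm k Ω u < ⊤

/-- `u ∈ 𝒱^k(Ω)`. -/
def MemVk {N : ℕ} (k : Euc N → Euc N → ℝ) (Ω : Set (Euc N)) (u : Euc N → ℝ) : Prop :=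
  MemDk k Ω u ∧
  ∀ r > (0:ℝ), ∃ C : ℝ, ∀ x, (∫⁻ y in (Metric.ball x r)ᶜ, ENNReal.ofReal (|u y| * k x y)) ≤ ENNReal.ofReal C

/-- `u ∈ 𝒱^k_loc(Ω)`. -/
def MemVkLoc {N : ℕ} (k : Euc N → Euc N → ℝ) (Ω : Set (Euc N)) (u : Euc N → ℝ) : Prop :=
  Measurable u ∧
  (∀ Ω' : Set (Euc N), IsOpen Ω' → IsCompact (closure Ω') → closure Ω' ⊆ Ω → MemDk k Ω' u) ∧
  ∀ r > (0:ℝ), ∃ C : ℝ, ∀ x, (∫⁻ y in (Metric.ball x r)ᶜ, ENNReal.ofReal (|u y| * k x y)) ≤ ENNReal.ofReal C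

/-- `u ∈ 𝒟^k(Ω)`. -/
def MemDkZero {N : ℕ} (k : Euc N → Euc N → ℝ) (Ω : Set (Euc N)) (u : Euc N → ℝ) : Prop :=
  Measurable u ∧ MemLp u 2 volume ∧ quadForm k Set.univ u < ⊤ ∧ ∀ᵐ x ∂(volume : Measure (Euc N)), x ∉ Ω → u x = 0

/-- `φ ∈ C_c^∞(Ω)`. -/
def IsTestFun {N : ℕ} (Ω : Set (Euc N)) (φ : Euc N → ℝ) : Prop :=
  ContDiff ℝ (⊤ : ℕ∞) φ ∧ HasCompactSupport φ ∧ tsupport φ ⊆ Ω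

/-- `c ∈ L^∞_loc(Ω)`. -/
def MemLinftyLoc {N : ℕ} (Ω : Set (Euc N)) (c : Euc N → ℝ) : Prop :=
  ∀ K ⊆ Ω, IsCompact K → ∃ M : ℝ, ∀ᵐ x ∂(volume.restrict K), |c x| ≤ M

/-- `κ_{k,Ω}(x)`. -/
def kappa {N : ℕ} (k : Euc N → Euc N → ℝ) (Ω : Set (Euc N)) (x : Euc N) : ℝ≥0∞ :=
  ∫⁻ y in Ωᶜ, ENNReal.ofReal (k x y)

/-- `Ω` has Lipschitz boundary. -/
def HasLipschitzBoundary (N : ℕ) (Ω : Set (Euc N)) : Prop :=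
  ∀ p ∈ frontier Ω, ∃ U ∈ nhds p, ∃ e : Euc N ≃ᵢ Euc N, ∃ γ : Euc N → ℝ, ∃ L : NNReal,
    LipschitzWith L γ ∧
    (∀ x y : Euc N, (∀ i : Fin N, (i : ℕ) + 1 < N → x i = y i) → γ x = γ y) ∧
    Ω ∩ U = {x ∈ U | ∀ i : Fin N, (i : ℕ) + 1 = N → γ (e x) < e x i}

/-- The quadratic form `b_{j,U}(u)` for a translation-invariant kernel `j(x-y)`. -/
def quadJ {N : ℕ} (j : Euc N → ℝ) (U : Set (Euc N)) (u : Euc N → ℝ) : ℝ≥0∞ :=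
  (1 / 2) * ∫⁻ x in U, ∫⁻ y in U, ENNReal.ofReal ((u x - u y) ^ 2 * j (x - y))

/-- The bilinear form `b_j(u,v)` over all of `ℝ^N`. -/
def bJ {N : ℕ} (j : Euc N → ℝ) (u v : Euc N → ℝ) : ℝ :=
  (1 / 2) * ∫ x, ∫ y, (u x - u y) * (v x - v y) * j (x - y)

/-- `u ∈ 𝒟^j(Ω)`. -/
def MemDJZero {N : ℕ} (j : Euc N → ℝ) (Ω : Set (Euc N)) (u : Euc N → ℝ) : Prop :=
  Measurable u ∧ MemLp u 2 volume ∧ quadJ j Set.univ u < ⊤ ∧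
    ∀ᵐ x ∂(volume : Measure (Euc N)), x ∉ Ω → u x = 0

section EigenfunctionBoundedProof

open MeasureTheory ENNReal Metric Set Filter

private lemma enn_sq' (r : ℝ) : ENNReal.ofReal |r| ^ (2:ℝ) = ENNReal.ofReal (r ^ 2) := by
  rw [ofReal_rpow_of_nonneg (abs_nonneg r) (by norm_num : (0:ℝ) ≤ 2)]
  norm_num [Real.rpow_natCast, sq_abs]

private lemma enn_sq_nonneg (r : ℝ) (h : 0 ≤ r) :
    ENNReal.ofReal r ^ (2:ℝ) = ENNReal.ofReal (r ^ 2) := by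
  conv_lhs => rw [← abs_of_nonneg h]
  exact enn_sq' r

private lemma sq_lintegral_ne_top {N : ℕ} {u : Euc N → ℝ} (h : MemLp u 2 (volume : Measure (Euc N))) :
    (∫⁻ y, ENNReal.ofReal (u y ^ 2) ∂(volume : Measure (Euc N))) ≠ ⊤ := by
  have h2 := h.integrable_sq.2
  rw [hasFiniteIntegral_iff_ofReal (Eventually.of_forall fun x => sq_nonneg _)] at h2
  exact h2.ne

private lemma eLpNorm_two_eq {N : ℕ} (u : Euc N → ℝ) (μ : Measure (Euc N)) :
    eLpNorm u 2 μ = (∫⁻ y, ENNReal.ofReal (u y ^ 2) ∂μ) ^ (1/2:ℝ) := by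
  rw [eLpNorm_eq_lintegral_rpow_enorm_toReal (by norm_num) (by norm_num)]
  congr 1
  refine lintegral_congr fun y => ?_
  rw [Real.enorm_eq_ofReal_abs, toReal_ofNat, enn_sq']

private lemma integrable_mul_L2 {N : ℕ} {u v : Euc N → ℝ} (hu : MemLp u 2 (volume : Measure (Euc N)))
    (hv : MemLp v 2 volume) : Integrable (fun x => u x * v x) volume := by
  refine Integrable.mono' (hu.integrable_sq.add hv.integrable_sq)
    (hu.aestronglyMeasurable.mul hv.aestronglyMeasurable)
    (Eventually.of_forall fun x => ?_)
  have h0 : ‖u x * v x‖ = |u x| * |v x| := by rw [Real.norm_eq_abs, abs_mul]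
  rw [h0]
  simp only [Pi.add_apply]
  nlinarith [sq_nonneg (|u x| - |v x|), sq_abs (u x), sq_abs (v x), abs_nonneg (u x), abs_nonneg (v x)]

private lemma one_side {N : ℕ} (j jmf : Euc N → ℝ)
    (hjmeas : Measurable j) (hj0 : ∀ z, 0 ≤ j z)
    (hmmeas : Measurable jmf) (hm0 : ∀ z, 0 ≤ jmf z)
    (hmle : ∀ z, jmf z ≤ j z) (hme : ∀ z, jmf (-z) = jmf z)
    (hMmfin : (∫⁻ z, ENNReal.ofReal (jmf z) ∂(volume : Measure (Euc N))) ≠ ⊤)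
    (hSmfin : (∫⁻ z, ENNReal.ofReal (jmf z ^ 2) ∂(volume : Measure (Euc N))) ≠ ⊤)
    (Ω : Set (Euc N)) (hΩm : MeasurableSet Ω) (hΩfin : volume Ω ≠ ⊤)
    (lam : ℝ) (hlam : 0 < lam)
    (hmlam : lam < (∫⁻ z, ENNReal.ofReal (jmf z) ∂(volume : Measure (Euc N))).toReal)
    (u : Euc N → ℝ) (hu : MemDJZero j Ω u)
    (heq : ∀ v, MemDJZero j Ω v → bJ j u v = lam * ∫ x in Ω, u x * v x) :
    ∀ᵐ x ∂(volume : Measure (Euc N)), u x ≤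
      (((∫⁻ y, ENNReal.ofReal (u y ^ 2) ∂(volume : Measure (Euc N))) ^ (1/2:ℝ) *
        (∫⁻ z, ENNReal.ofReal (jmf z ^ 2) ∂(volume : Measure (Euc N))) ^ (1/2:ℝ)).toReal) /
        ((∫⁻ z, ENNReal.ofReal (jmf z) ∂(volume : Measure (Euc N))).toReal - lam) := by
  obtain ⟨hum, huL2, huQ, huZ⟩ := hu
  set Mm := ∫⁻ z, ENNReal.ofReal (jmf z) ∂(volume : Measure (Euc N)) with hMmdef
  set Sm := ∫⁻ z, ENNReal.ofReal (jmf z ^ 2) ∂(volume : Measure (Euc N)) with hSmdef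
  set Su := ∫⁻ y, ENNReal.ofReal (u y ^ 2) ∂(volume : Measure (Euc N)) with hSudef
  set mr := Mm.toReal with hmrdef
  have hml : 0 < mr - lam := by simp only [hmrdef]; linarith
  have hSufin : Su ≠ ⊤ := sq_lintegral_ne_top huL2
  set Kb := (Su ^ (1/2:ℝ) * Sm ^ (1/2:ℝ)).toReal with hKbdef
  have hKb0 : 0 ≤ Kb := ENNReal.toReal_nonneg
  set t := Kb / (mr - lam) with htdef
  have ht0 : 0 ≤ t := div_nonneg hKb0 hml.le
  show ∀ᵐ x ∂(volume : Measure (Euc N)), u x ≤ t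
  -- the truncation v
  set v := fun x : Euc N => max (u x - t) 0 with hvdef
  have hvm : Measurable v := (hum.sub_const t).max measurable_const
  have hvnn : ∀ x, 0 ≤ v x := fun x => le_max_right _ _
  have hvabs : ∀ x y : Euc N, |v x - v y| ≤ |u x - u y| := by
    intro x y
    have h := abs_max_sub_max_le_abs (u x - t) (u y - t) 0
    have h2 : (u x - t) - (u y - t) = u x - u y := by ring
    rw [h2] at h
    exact h
  have hvle : ∀ x, |v x| ≤ |u x| := by
    intro x
    rw [abs_of_nonneg (hvnn x)]
    rcases le_or_gt (u x) t with h | h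
    · rw [show v x = 0 from max_eq_right (by linarith)]
      exact abs_nonneg _
    · rw [show v x = u x - t from max_eq_left (by linarith)]
      have h3 : 0 ≤ u x := le_trans ht0 h.le
      rw [abs_of_nonneg h3]; linarith
  have hvsq : ∀ x y : Euc N, (v x - v y) ^ 2 ≤ (u x - u y) ^ 2 := by
    intro x y
    have := pow_le_pow_left₀ (abs_nonneg (v x - v y)) (hvabs x y) 2
    simpa [sq_abs] using this
  have hvL2 : MemLp v 2 (volume : Measure (Euc N)) :=
    huL2.mono hvm.aestronglyMeasurable
      (Eventually.of_forall fun x => by simpa [Real.norm_eq_abs] using hvle x)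
  have hvMem : MemDJZero j Ω v := by
    refine ⟨hvm, hvL2, ?_, ?_⟩
    · refine lt_of_le_of_lt ?_ huQ
      unfold quadJ
      refine mul_le_mul_right (lintegral_mono fun x => lintegral_mono fun y => ?_) _
      exact ENNReal.ofReal_le_ofReal (mul_le_mul_of_nonneg_right (hvsq x y) (hj0 _))
    · filter_upwards [huZ] with x hx hxΩ
      have h1 : u x = 0 := hx hxΩ
      simp only [hvdef, h1]
      exact max_eq_right (by linarith)
  -- the eigen-equation for v
  have heqv := heq v hvMem
  -- basic integrabilities
  have hIuv : Integrable (fun x => u x * v x) volume := integrable_mul_L2 huL2 hvL2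
  have hIv2 : Integrable (fun x => v x ^ 2) volume := hvL2.integrable_sq
  haveI : IsFiniteMeasure (volume.restrict Ω) :=
    ⟨by rw [Measure.restrict_apply_univ]; exact hΩfin.lt_top⟩
  have hIv : Integrable v volume := by
    have h1 : Ω.indicator v =ᵐ[volume] v := by
      filter_upwards [huZ] with x hx
      by_cases hmem : x ∈ Ω
      · rw [Set.indicator_of_mem hmem]
      · rw [Set.indicator_of_notMem hmem]
        have h2 : u x = 0 := hx hmem
        simp only [hvdef, h2]
        exact (max_eq_right (by linarith)).symm
    refine Integrable.congr ?_ h1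
    rw [integrable_indicator_iff hΩm]
    exact (hvL2.restrict Ω).integrable one_le_two
  -- product-measure integrability of the master dominating function
  have hGmeas : Measurable fun p : Euc N × Euc N => (u p.1 - u p.2) ^ 2 * j (p.1 - p.2) :=
    (((hum.comp measurable_fst).sub (hum.comp measurable_snd)).pow_const 2).mul
      (hjmeas.comp (measurable_fst.sub measurable_snd))
  have hG : Integrable (fun p : Euc N × Euc N => (u p.1 - u p.2) ^ 2 * j (p.1 - p.2))
      ((volume : Measure (Euc N)).prod volume) := by
    refine ⟨hGmeas.aestronglyMeasurable, ?_⟩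
    rw [hasFiniteIntegral_iff_ofReal
      (Eventually.of_forall fun p => mul_nonneg (sq_nonneg _) (hj0 _))]
    rw [lintegral_prod _ (hGmeas.ennreal_ofReal.aemeasurable)]
    simp only [quadJ, Measure.restrict_univ] at huQ
    have hI : (∫⁻ x, ∫⁻ y, ENNReal.ofReal ((u x - u y) ^ 2 * j (x - y))
        ∂(volume : Measure (Euc N)) ∂(volume : Measure (Euc N))) ≠ ⊤ := by
      intro htop
      rw [htop, ENNReal.mul_top (by norm_num : (1/2 : ℝ≥0∞) ≠ 0)] at huQ
      exact absurd huQ (lt_irrefl _)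
    exact hI.lt_top
  -- integrability of (u x - u y)(v x - v y) k(x-y) for minorant kernels k
  have hFk : ∀ k : Euc N → ℝ, Measurable k → (∀ z, 0 ≤ k z) → (∀ z, k z ≤ j z) →
      Integrable (fun p : Euc N × Euc N => (u p.1 - u p.2) * (v p.1 - v p.2) * k (p.1 - p.2))
        ((volume : Measure (Euc N)).prod volume) := by
    intro k hkm hk0 hkj
    have hmeask : Measurable fun p : Euc N × Euc N =>
        (u p.1 - u p.2) * (v p.1 - v p.2) * k (p.1 - p.2) :=
      (((hum.comp measurable_fst).sub (hum.comp measurable_snd)).mul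
        ((hvm.comp measurable_fst).sub (hvm.comp measurable_snd))).mul
        (hkm.comp (measurable_fst.sub measurable_snd))
    refine hG.mono' hmeask.aestronglyMeasurable (Eventually.of_forall fun p => ?_)
    have h1 : |v p.1 - v p.2| ≤ |u p.1 - u p.2| := hvabs _ _
    have h2 : 0 ≤ k (p.1 - p.2) := hk0 _
    have h3 : k (p.1 - p.2) ≤ j (p.1 - p.2) := hkj _
    have h4 : ‖(u p.1 - u p.2) * (v p.1 - v p.2) * k (p.1 - p.2)‖
        = |u p.1 - u p.2| * |v p.1 - v p.2| * k (p.1 - p.2) := by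
      rw [Real.norm_eq_abs, abs_mul, abs_mul, abs_of_nonneg h2]
    rw [h4]
    calc |u p.1 - u p.2| * |v p.1 - v p.2| * k (p.1 - p.2)
        ≤ |u p.1 - u p.2| * |u p.1 - u p.2| * j (p.1 - p.2) := by
          apply mul_le_mul (mul_le_mul_of_nonneg_left h1 (abs_nonneg _)) h3 h2
          positivity
      _ = (u p.1 - u p.2) ^ 2 * j (p.1 - p.2) := by rw [abs_mul_abs_self]; ring
  -- Tonelli computations for the middle kernel
  have hjm_ofReal_meas : Measurable fun z => ENNReal.ofReal (jmf z) := hmmeas.ennreal_ofReal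
  have htransL : ∀ x : Euc N, (∫⁻ y, ENNReal.ofReal (jmf (x - y)) ∂(volume : Measure (Euc N))) = Mm :=
    fun x => (Measure.measurePreserving_sub_left volume x).lintegral_comp hjm_ofReal_meas
  have hmeasL : ∀ x : Euc N, Measurable fun y : Euc N => ENNReal.ofReal (jmf (x - y)) :=
    fun x => hjm_ofReal_meas.comp (measurable_const.sub measurable_id)
  have hmeasR : ∀ y : Euc N, Measurable fun x : Euc N => ENNReal.ofReal (jmf (x - y)) :=
    fun y => hjm_ofReal_meas.comp (measurable_id.sub measurable_const)
  have htransR : ∀ y : Euc N, (∫⁻ x, ENNReal.ofReal (jmf (x - y)) ∂(volume : Measure (Euc N))) = Mm :=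
    fun y => lintegral_sub_right_eq_self (fun z => ENNReal.ofReal (jmf z)) y
  have hsqmeas : Measurable fun z => ENNReal.ofReal (jmf z ^ 2) := (hmmeas.pow_const 2).ennreal_ofReal
  have htransSq : ∀ x : Euc N,
      (∫⁻ y, ENNReal.ofReal (jmf (x - y) ^ 2) ∂(volume : Measure (Euc N))) = Sm :=
    fun x => (Measure.measurePreserving_sub_left volume x).lintegral_comp hsqmeas
  -- cross integrability
  have hcross : ∀ a b : Euc N → ℝ, Measurable a → Measurable b →
      (∫⁻ y, ENNReal.ofReal (a y ^ 2) ∂(volume : Measure (Euc N))) ≠ ⊤ →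
      (∫⁻ y, ENNReal.ofReal (b y ^ 2) ∂(volume : Measure (Euc N))) ≠ ⊤ →
      Integrable (fun p : Euc N × Euc N => a p.1 * b p.2 * jmf (p.1 - p.2))
        ((volume : Measure (Euc N)).prod volume) := by
    intro a b ham hbm hSa hSb
    have hmeask : Measurable fun p : Euc N × Euc N => a p.1 * b p.2 * jmf (p.1 - p.2) :=
      ((ham.comp measurable_fst).mul (hbm.comp measurable_snd)).mul
        (hmmeas.comp (measurable_fst.sub measurable_snd))
    refine ⟨hmeask.aestronglyMeasurable, ?_⟩
    rw [hasFiniteIntegral_iff_norm]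
    have hpt : ∀ p : Euc N × Euc N, ENNReal.ofReal ‖a p.1 * b p.2 * jmf (p.1 - p.2)‖
        ≤ ENNReal.ofReal (a p.1 ^ 2 * jmf (p.1 - p.2)) + ENNReal.ofReal (b p.2 ^ 2 * jmf (p.1 - p.2)) := by
      intro p
      rw [← ENNReal.ofReal_add (mul_nonneg (sq_nonneg _) (hm0 _)) (mul_nonneg (sq_nonneg _) (hm0 _))]
      apply ENNReal.ofReal_le_ofReal
      have h0 : |a p.1| * |b p.2| ≤ a p.1 ^ 2 + b p.2 ^ 2 := by
        nlinarith [sq_nonneg (|a p.1| - |b p.2|), sq_abs (a p.1), sq_abs (b p.2)]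
      have h1 := mul_le_mul_of_nonneg_right h0 (hm0 (p.1 - p.2))
      have h2 : ‖a p.1 * b p.2 * jmf (p.1 - p.2)‖ = |a p.1| * |b p.2| * jmf (p.1 - p.2) := by
        rw [Real.norm_eq_abs, abs_mul, abs_mul, abs_of_nonneg (hm0 _)]
      rw [h2]; nlinarith [hm0 (p.1 - p.2)]
    refine lt_of_le_of_lt (lintegral_mono hpt) ?_
    have hm1 : Measurable fun p : Euc N × Euc N => ENNReal.ofReal (a p.1 ^ 2 * jmf (p.1 - p.2)) :=
      (((ham.comp measurable_fst).pow_const 2).mul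
        (hmmeas.comp (measurable_fst.sub measurable_snd))).ennreal_ofReal
    have hm2 : Measurable fun p : Euc N × Euc N => ENNReal.ofReal (b p.2 ^ 2 * jmf (p.1 - p.2)) :=
      (((hbm.comp measurable_snd).pow_const 2).mul
        (hmmeas.comp (measurable_fst.sub measurable_snd))).ennreal_ofReal
    rw [lintegral_add_left hm1]
    have hv1 : (∫⁻ p : Euc N × Euc N, ENNReal.ofReal (a p.1 ^ 2 * jmf (p.1 - p.2))
        ∂((volume : Measure (Euc N)).prod volume))
        = (∫⁻ x, ENNReal.ofReal (a x ^ 2) ∂(volume : Measure (Euc N))) * Mm := by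
      rw [lintegral_prod _ hm1.aemeasurable]
      have : ∀ x : Euc N, (∫⁻ y, ENNReal.ofReal (a x ^ 2 * jmf (x - y)) ∂(volume : Measure (Euc N)))
          = ENNReal.ofReal (a x ^ 2) * Mm := by
        intro x
        simp_rw [ENNReal.ofReal_mul (sq_nonneg (a x))]
        rw [lintegral_const_mul _ (hmeasL x), htransL x]
      simp_rw [this]
      exact lintegral_mul_const _ (ham.pow_const 2).ennreal_ofReal
    have hv2 : (∫⁻ p : Euc N × Euc N, ENNReal.ofReal (b p.2 ^ 2 * jmf (p.1 - p.2))
        ∂((volume : Measure (Euc N)).prod volume))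
        = (∫⁻ y, ENNReal.ofReal (b y ^ 2) ∂(volume : Measure (Euc N))) * Mm := by
      rw [lintegral_prod_symm _ hm2.aemeasurable]
      have : ∀ y : Euc N, (∫⁻ x, ENNReal.ofReal (b y ^ 2 * jmf (x - y)) ∂(volume : Measure (Euc N)))
          = ENNReal.ofReal (b y ^ 2) * Mm := by
        intro y
        simp_rw [ENNReal.ofReal_mul (sq_nonneg (b y))]
        rw [lintegral_const_mul _ (hmeasR y), htransR y]
      simp_rw [this]
      exact lintegral_mul_const _ (hbm.pow_const 2).ennreal_ofReal
    rw [hv1, hv2]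
    exact ENNReal.add_lt_top.mpr ⟨ENNReal.mul_lt_top hSa.lt_top hMmfin.lt_top,
      ENNReal.mul_lt_top hSb.lt_top hMmfin.lt_top⟩
  -- same-coordinate integrability
  have hjmInt : Integrable jmf volume :=
    ⟨hmmeas.aestronglyMeasurable,
      (hasFiniteIntegral_iff_ofReal (Eventually.of_forall hm0)).mpr hMmfin.lt_top⟩
  have hjm_val : ∫ z, jmf z = mr := by
    rw [integral_eq_lintegral_of_nonneg_ae (Eventually.of_forall hm0) hmmeas.aestronglyMeasurable]
  have hsame : ∀ w : Euc N → ℝ, Measurable w → Integrable w volume →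
      Integrable (fun p : Euc N × Euc N => w p.1 * jmf (p.1 - p.2))
        ((volume : Measure (Euc N)).prod volume) := by
    intro w hwm hwi
    have hmeask : Measurable fun p : Euc N × Euc N => w p.1 * jmf (p.1 - p.2) :=
      (hwm.comp measurable_fst).mul (hmmeas.comp (measurable_fst.sub measurable_snd))
    refine ⟨hmeask.aestronglyMeasurable, ?_⟩
    rw [hasFiniteIntegral_iff_norm]
    have hpt : ∀ p : Euc N × Euc N, ENNReal.ofReal ‖w p.1 * jmf (p.1 - p.2)‖
        = ENNReal.ofReal |w p.1| * ENNReal.ofReal (jmf (p.1 - p.2)) := by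
      intro p
      rw [Real.norm_eq_abs, abs_mul, abs_of_nonneg (hm0 _), ENNReal.ofReal_mul (abs_nonneg _)]
    simp_rw [hpt]
    have hprodmeas : Measurable fun p : Euc N × Euc N =>
        ENNReal.ofReal |w p.1| * ENNReal.ofReal (jmf (p.1 - p.2)) :=
      ((hwm.comp measurable_fst).abs.ennreal_ofReal).mul
        (hjm_ofReal_meas.comp (measurable_fst.sub measurable_snd))
    rw [lintegral_prod _ hprodmeas.aemeasurable]
    have : ∀ x : Euc N, (∫⁻ y, ENNReal.ofReal |w x| * ENNReal.ofReal (jmf (x - y))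
        ∂(volume : Measure (Euc N))) = ENNReal.ofReal |w x| * Mm := by
      intro x
      rw [lintegral_const_mul _ (hmeasL x), htransL x]
    simp_rw [this]
    rw [lintegral_mul_const _ hwm.abs.ennreal_ofReal]
    have hw1 : (∫⁻ x, ENNReal.ofReal |w x| ∂(volume : Measure (Euc N))) ≠ ⊤ := by
      have h2 := hwi.2
      rw [hasFiniteIntegral_iff_norm] at h2
      simp_rw [Real.norm_eq_abs] at h2
      exact h2.ne
    exact ENNReal.mul_lt_top hw1.lt_top hMmfin.lt_top
  have hsame_val : ∀ w : Euc N → ℝ, Measurable w → Integrable w volume →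
      (∫ p : Euc N × Euc N, w p.1 * jmf (p.1 - p.2) ∂((volume : Measure (Euc N)).prod volume))
        = (∫ x, w x) * mr := by
    intro w hwm hwi
    rw [integral_prod _ (hsame w hwm hwi)]
    have : ∀ x : Euc N, (∫ y, w x * jmf (x - y)) = w x * mr := by
      intro x
      rw [integral_const_mul, integral_sub_left_eq_self jmf volume x, hjm_val]
    simp_rw [this]
    exact integral_mul_const mr w
  -- the convolution f = jmf * u
  set f := fun x : Euc N => ∫ y, u y * jmf (x - y) with hfdef
  have hfsm : StronglyMeasurable f := by
    apply StronglyMeasurable.integral_prod_right'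
      (f := fun p : Euc N × Euc N => u p.2 * jmf (p.1 - p.2))
    exact ((hum.comp measurable_snd).mul
      (hmmeas.comp (measurable_fst.sub measurable_snd))).stronglyMeasurable
  have hfb : ∀ x, |f x| ≤ Kb := by
    intro x
    have h1 : ‖∫ y, u y * jmf (x - y)‖ ≤ (∫⁻ y, ENNReal.ofReal ‖u y * jmf (x - y)‖
        ∂(volume : Measure (Euc N))).toReal := norm_integral_le_lintegral_norm _
    rw [← Real.norm_eq_abs]
    refine le_trans h1 ?_
    have h2 : (∫⁻ y, ENNReal.ofReal ‖u y * jmf (x - y)‖ ∂(volume : Measure (Euc N)))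
        ≤ Su ^ (1/2:ℝ) * Sm ^ (1/2:ℝ) := by
      have hCS := ENNReal.lintegral_mul_le_Lp_mul_Lq (volume : Measure (Euc N))
        Real.HolderConjugate.two_two
        (f := fun y => ENNReal.ofReal |u y|)
        (g := fun y => ENNReal.ofReal (jmf (x - y)))
        hum.abs.ennreal_ofReal.aemeasurable
        ((hjm_ofReal_meas.comp (measurable_const.sub measurable_id)).aemeasurable)
      have hL : (∫⁻ y, ENNReal.ofReal ‖u y * jmf (x - y)‖ ∂(volume : Measure (Euc N)))
          = ∫⁻ y, (fun y => ENNReal.ofReal |u y|) y * (fun y => ENNReal.ofReal (jmf (x - y))) y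
            ∂(volume : Measure (Euc N)) := by
        refine lintegral_congr fun y => ?_
        rw [Real.norm_eq_abs, abs_mul, abs_of_nonneg (hm0 _), ENNReal.ofReal_mul (abs_nonneg _)]
      rw [hL]
      have hR1 : (∫⁻ y, ENNReal.ofReal |u y| ^ (2:ℝ) ∂(volume : Measure (Euc N))) = Su := by
        refine lintegral_congr fun y => ?_
        exact enn_sq' (u y)
      have hR2 : (∫⁻ y, ENNReal.ofReal (jmf (x - y)) ^ (2:ℝ) ∂(volume : Measure (Euc N))) = Sm := by
        rw [← htransSq x]
        refine lintegral_congr fun y => ?_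
        exact enn_sq_nonneg (jmf (x - y)) (hm0 _)
      rw [hR1, hR2] at hCS
      exact hCS
    have h3 : Su ^ (1/2:ℝ) * Sm ^ (1/2:ℝ) ≠ ⊤ :=
      ENNReal.mul_ne_top (ENNReal.rpow_ne_top_of_nonneg (by norm_num) hSufin)
        (ENNReal.rpow_ne_top_of_nonneg (by norm_num) hSmfin)
    exact ENNReal.toReal_mono h3 h2
  -- the four product integrals for jmf
  have hSvfin : (∫⁻ y, ENNReal.ofReal (v y ^ 2) ∂(volume : Measure (Euc N))) ≠ ⊤ :=
    sq_lintegral_ne_top hvL2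
  have hg1 : Integrable (fun p : Euc N × Euc N => u p.1 * v p.1 * jmf (p.1 - p.2))
      ((volume : Measure (Euc N)).prod volume) :=
    hsame (fun x => u x * v x) (hum.mul hvm) hIuv
  have hg1v : (∫ p : Euc N × Euc N, u p.1 * v p.1 * jmf (p.1 - p.2)
      ∂((volume : Measure (Euc N)).prod volume)) = (∫ x, u x * v x) * mr :=
    hsame_val (fun x => u x * v x) (hum.mul hvm) hIuv
  have hg2 : Integrable (fun p : Euc N × Euc N => u p.2 * v p.2 * jmf (p.1 - p.2))
      ((volume : Measure (Euc N)).prod volume) := by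
    have hmeask : Measurable fun p : Euc N × Euc N => u p.2 * v p.2 * jmf (p.1 - p.2) :=
      ((hum.comp measurable_snd).mul (hvm.comp measurable_snd)).mul
        (hmmeas.comp (measurable_fst.sub measurable_snd))
    refine ⟨hmeask.aestronglyMeasurable, ?_⟩
    rw [hasFiniteIntegral_iff_norm]
    have hpt : ∀ p : Euc N × Euc N, ENNReal.ofReal ‖u p.2 * v p.2 * jmf (p.1 - p.2)‖
        = ENNReal.ofReal |u p.2 * v p.2| * ENNReal.ofReal (jmf (p.1 - p.2)) := by
      intro p
      rw [Real.norm_eq_abs, abs_mul, abs_of_nonneg (hm0 _), ENNReal.ofReal_mul (abs_nonneg _)]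
    simp_rw [hpt]
    have hprodmeas2 : Measurable fun p : Euc N × Euc N =>
        ENNReal.ofReal |u p.2 * v p.2| * ENNReal.ofReal (jmf (p.1 - p.2)) :=
      (((hum.comp measurable_snd).mul (hvm.comp measurable_snd)).abs.ennreal_ofReal).mul
        (hjm_ofReal_meas.comp (measurable_fst.sub measurable_snd))
    rw [lintegral_prod_symm _ hprodmeas2.aemeasurable]
    have : ∀ y : Euc N, (∫⁻ x, ENNReal.ofReal |u y * v y| * ENNReal.ofReal (jmf (x - y))
        ∂(volume : Measure (Euc N))) = ENNReal.ofReal |u y * v y| * Mm := by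
      intro y
      rw [lintegral_const_mul _ (hmeasR y), htransR y]
    simp_rw [this]
    rw [lintegral_mul_const (f := fun x => ENNReal.ofReal |u x * v x|) _ (hum.mul hvm).abs.ennreal_ofReal]
    have hw1 : (∫⁻ x, ENNReal.ofReal |u x * v x| ∂(volume : Measure (Euc N))) ≠ ⊤ := by
      have h2 := hIuv.2
      rw [hasFiniteIntegral_iff_norm] at h2
      simp_rw [Real.norm_eq_abs] at h2
      exact h2.ne
    exact ENNReal.mul_lt_top hw1.lt_top hMmfin.lt_top
  have hg2v : (∫ p : Euc N × Euc N, u p.2 * v p.2 * jmf (p.1 - p.2)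
      ∂((volume : Measure (Euc N)).prod volume)) = (∫ x, u x * v x) * mr := by
    rw [integral_prod_symm _ hg2]
    have : ∀ y : Euc N, (∫ x, u y * v y * jmf (x - y)) = u y * v y * mr := by
      intro y
      rw [integral_const_mul, integral_sub_right_eq_self jmf y, hjm_val]
    simp_rw [this]
    exact integral_mul_const mr _
  have hg3 : Integrable (fun p : Euc N × Euc N => u p.1 * v p.2 * jmf (p.1 - p.2))
      ((volume : Measure (Euc N)).prod volume) := hcross u v hum hvm hSufin hSvfin
  have hg4 : Integrable (fun p : Euc N × Euc N => u p.2 * v p.1 * jmf (p.1 - p.2))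
      ((volume : Measure (Euc N)).prod volume) :=
    (hcross v u hvm hum hSvfin hSufin).congr (Eventually.of_forall fun p => by ring)
  have hjmsub : ∀ x y : Euc N, jmf (x - y) = jmf (y - x) := by
    intro x y
    rw [← neg_sub y x, hme]
  have hg3v : (∫ p : Euc N × Euc N, u p.1 * v p.2 * jmf (p.1 - p.2)
      ∂((volume : Measure (Euc N)).prod volume)) = ∫ x, v x * f x := by
    rw [integral_prod_symm _ hg3]
    have : ∀ y : Euc N, (∫ x, u x * v y * jmf (x - y)) = v y * f y := by
      intro y
      have h1 : ∀ x : Euc N, u x * v y * jmf (x - y) = v y * (u x * jmf (y - x)) := by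
        intro x
        rw [hjmsub x y]; ring
      simp_rw [h1]
      rw [integral_const_mul]
    simp_rw [this]
  have hg4v : (∫ p : Euc N × Euc N, u p.2 * v p.1 * jmf (p.1 - p.2)
      ∂((volume : Measure (Euc N)).prod volume)) = ∫ x, v x * f x := by
    rw [integral_prod _ hg4]
    have : ∀ x : Euc N, (∫ y, u y * v x * jmf (x - y)) = v x * f x := by
      intro x
      have h1 : ∀ y : Euc N, u y * v x * jmf (x - y) = v x * (u y * jmf (x - y)) := by
        intro y; ring
      simp_rw [h1]
      rw [integral_const_mul]
    simp_rw [this]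
  -- the remainder kernel
  set jrf := fun z : Euc N => j z - jmf z with hjrdef
  have hjrm : Measurable jrf := hjmeas.sub hmmeas
  have hjr0 : ∀ z, 0 ≤ jrf z := fun z => sub_nonneg.mpr (hmle z)
  have hjrle : ∀ z, jrf z ≤ j z := fun z => sub_le_self _ (hm0 z)
  have hFr : Integrable (fun p : Euc N × Euc N =>
      (u p.1 - u p.2) * (v p.1 - v p.2) * jrf (p.1 - p.2))
      ((volume : Measure (Euc N)).prod volume) := hFk jrf hjrm hjr0 hjrle
  have hFj : Integrable (fun p : Euc N × Euc N =>
      (u p.1 - u p.2) * (v p.1 - v p.2) * j (p.1 - p.2))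
      ((volume : Measure (Euc N)).prod volume) := hFk j hjmeas hj0 (fun z => le_refl _)
  have hmono : ∀ x y : Euc N, 0 ≤ (u x - u y) * (v x - v y) := by
    intro x y
    rcases le_total (u x) (u y) with h | h
    · have hv' : v x ≤ v y := max_le_max (by linarith) le_rfl
      have := mul_nonneg (sub_nonneg.mpr h) (sub_nonneg.mpr hv')
      nlinarith
    · have hv' : v y ≤ v x := max_le_max (by linarith) le_rfl
      exact mul_nonneg (by linarith) (by linarith)
  have hFr_nonneg : 0 ≤ ∫ p : Euc N × Euc N,
      (u p.1 - u p.2) * (v p.1 - v p.2) * jrf (p.1 - p.2)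
      ∂((volume : Measure (Euc N)).prod volume) :=
    integral_nonneg fun p => mul_nonneg (hmono p.1 p.2) (hjr0 _)
  -- key identity for bJ
  have hbJ : bJ j u v = (1/2) * (∫ p : Euc N × Euc N,
      (u p.1 - u p.2) * (v p.1 - v p.2) * jrf (p.1 - p.2)
      ∂((volume : Measure (Euc N)).prod volume)) + mr * (∫ x, u x * v x) - ∫ x, v x * f x := by
    unfold bJ
    have hiter : (∫ x, ∫ y, (u x - u y) * (v x - v y) * j (x - y))
        = ∫ p : Euc N × Euc N, (u p.1 - u p.2) * (v p.1 - v p.2) * j (p.1 - p.2)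
          ∂((volume : Measure (Euc N)).prod volume) :=
      integral_integral (f := fun x y => (u x - u y) * (v x - v y) * j (x - y)) hFj
    rw [hiter]
    have hg12 : Integrable (fun p : Euc N × Euc N =>
        u p.1 * v p.1 * jmf (p.1 - p.2) + u p.2 * v p.2 * jmf (p.1 - p.2))
        ((volume : Measure (Euc N)).prod volume) := hg1.add hg2
    have hg123 : Integrable (fun p : Euc N × Euc N =>
        u p.1 * v p.1 * jmf (p.1 - p.2) + u p.2 * v p.2 * jmf (p.1 - p.2)
          - u p.1 * v p.2 * jmf (p.1 - p.2))
        ((volume : Measure (Euc N)).prod volume) := hg12.sub hg3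
    have hg1234 : Integrable (fun p : Euc N × Euc N =>
        u p.1 * v p.1 * jmf (p.1 - p.2) + u p.2 * v p.2 * jmf (p.1 - p.2)
          - u p.1 * v p.2 * jmf (p.1 - p.2) - u p.2 * v p.1 * jmf (p.1 - p.2))
        ((volume : Measure (Euc N)).prod volume) := hg123.sub hg4
    have hsplit : (∫ p : Euc N × Euc N, (u p.1 - u p.2) * (v p.1 - v p.2) * j (p.1 - p.2)
        ∂((volume : Measure (Euc N)).prod volume))
        = (∫ p : Euc N × Euc N, (u p.1 - u p.2) * (v p.1 - v p.2) * jrf (p.1 - p.2)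
          ∂((volume : Measure (Euc N)).prod volume))
        + ((∫ p : Euc N × Euc N, u p.1 * v p.1 * jmf (p.1 - p.2)
            ∂((volume : Measure (Euc N)).prod volume))
          + (∫ p : Euc N × Euc N, u p.2 * v p.2 * jmf (p.1 - p.2)
            ∂((volume : Measure (Euc N)).prod volume))
          - (∫ p : Euc N × Euc N, u p.1 * v p.2 * jmf (p.1 - p.2)
            ∂((volume : Measure (Euc N)).prod volume))
          - (∫ p : Euc N × Euc N, u p.2 * v p.1 * jmf (p.1 - p.2)
            ∂((volume : Measure (Euc N)).prod volume))) := by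
      calc (∫ p : Euc N × Euc N, (u p.1 - u p.2) * (v p.1 - v p.2) * j (p.1 - p.2)
          ∂((volume : Measure (Euc N)).prod volume))
          = ∫ p : Euc N × Euc N, ((u p.1 - u p.2) * (v p.1 - v p.2) * jrf (p.1 - p.2)
            + (u p.1 * v p.1 * jmf (p.1 - p.2) + u p.2 * v p.2 * jmf (p.1 - p.2)
              - u p.1 * v p.2 * jmf (p.1 - p.2) - u p.2 * v p.1 * jmf (p.1 - p.2)))
            ∂((volume : Measure (Euc N)).prod volume) := by
            refine integral_congr_ae (Eventually.of_forall fun p => ?_)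
            simp only [hjrdef]
            ring
        _ = (∫ p : Euc N × Euc N, (u p.1 - u p.2) * (v p.1 - v p.2) * jrf (p.1 - p.2)
            ∂((volume : Measure (Euc N)).prod volume))
          + ∫ p : Euc N × Euc N, (u p.1 * v p.1 * jmf (p.1 - p.2)
              + u p.2 * v p.2 * jmf (p.1 - p.2) - u p.1 * v p.2 * jmf (p.1 - p.2)
              - u p.2 * v p.1 * jmf (p.1 - p.2))
            ∂((volume : Measure (Euc N)).prod volume) := integral_add hFr hg1234
        _ = (∫ p : Euc N × Euc N, (u p.1 - u p.2) * (v p.1 - v p.2) * jrf (p.1 - p.2)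
            ∂((volume : Measure (Euc N)).prod volume))
          + ((∫ p : Euc N × Euc N, (u p.1 * v p.1 * jmf (p.1 - p.2)
              + u p.2 * v p.2 * jmf (p.1 - p.2) - u p.1 * v p.2 * jmf (p.1 - p.2))
            ∂((volume : Measure (Euc N)).prod volume))
            - ∫ p : Euc N × Euc N, u p.2 * v p.1 * jmf (p.1 - p.2)
              ∂((volume : Measure (Euc N)).prod volume)) := by
            rw [integral_sub hg123 hg4]
        _ = (∫ p : Euc N × Euc N, (u p.1 - u p.2) * (v p.1 - v p.2) * jrf (p.1 - p.2)
            ∂((volume : Measure (Euc N)).prod volume))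
          + ((∫ p : Euc N × Euc N, (u p.1 * v p.1 * jmf (p.1 - p.2)
              + u p.2 * v p.2 * jmf (p.1 - p.2))
            ∂((volume : Measure (Euc N)).prod volume))
            - (∫ p : Euc N × Euc N, u p.1 * v p.2 * jmf (p.1 - p.2)
              ∂((volume : Measure (Euc N)).prod volume))
            - ∫ p : Euc N × Euc N, u p.2 * v p.1 * jmf (p.1 - p.2)
              ∂((volume : Measure (Euc N)).prod volume)) := by
            rw [integral_sub hg12 hg3]
        _ = (∫ p : Euc N × Euc N, (u p.1 - u p.2) * (v p.1 - v p.2) * jrf (p.1 - p.2)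
            ∂((volume : Measure (Euc N)).prod volume))
          + ((∫ p : Euc N × Euc N, u p.1 * v p.1 * jmf (p.1 - p.2)
            ∂((volume : Measure (Euc N)).prod volume))
            + (∫ p : Euc N × Euc N, u p.2 * v p.2 * jmf (p.1 - p.2)
              ∂((volume : Measure (Euc N)).prod volume))
            - (∫ p : Euc N × Euc N, u p.1 * v p.2 * jmf (p.1 - p.2)
              ∂((volume : Measure (Euc N)).prod volume))
            - ∫ p : Euc N × Euc N, u p.2 * v p.1 * jmf (p.1 - p.2)
              ∂((volume : Measure (Euc N)).prod volume)) := by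
            rw [integral_add hg1 hg2]
    rw [hsplit, hg1v, hg2v, hg3v, hg4v]
    ring
  -- translate the eigen-equation
  have hΩint : ∫ x in Ω, u x * v x = ∫ x, u x * v x := by
    have hc : ∫ x in Ωᶜ, u x * v x ∂volume = 0 := by
      have hz : ∀ᵐ x ∂(volume.restrict Ωᶜ), u x * v x = 0 := by
        rw [ae_restrict_iff' hΩm.compl]
        filter_upwards [huZ] with x hx hmem
        rw [hx hmem, zero_mul]
      calc ∫ x in Ωᶜ, u x * v x ∂volume = ∫ _x in Ωᶜ, (0:ℝ) ∂volume := integral_congr_ae hz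
        _ = 0 := by simp
    have := integral_add_compl hΩm hIuv
    rw [hc, add_zero] at this
    exact this
  have hle1 : (mr - lam) * ∫ x, u x * v x ≤ ∫ x, v x * f x := by
    rw [hbJ, hΩint] at heqv
    nlinarith [hFr_nonneg]
  -- decompose ∫ u v
  have hsum : ∫ x, u x * v x = (∫ x, v x ^ 2) + t * ∫ x, v x := by
    have hpt : ∀ x, u x * v x = v x ^ 2 + t * v x := by
      intro x
      rcases le_or_gt (u x) t with h | h
      · rw [show v x = 0 from max_eq_right (by linarith)]; ring
      · rw [show v x = u x - t from max_eq_left (by linarith)]; ring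
    calc ∫ x, u x * v x = ∫ x, (v x ^ 2 + t * v x) := by
          refine integral_congr_ae (Eventually.of_forall fun x => hpt x)
      _ = (∫ x, v x ^ 2) + ∫ x, t * v x := integral_add hIv2 (hIv.const_mul t)
      _ = (∫ x, v x ^ 2) + t * ∫ x, v x := by rw [integral_const_mul]
  have hIvf : Integrable (fun x => v x * f x) volume := by
    refine Integrable.mono' ((hIv.abs.const_mul Kb)) (hvm.aestronglyMeasurable.mul
      hfsm.aestronglyMeasurable) (Eventually.of_forall fun x => ?_)
    rw [Real.norm_eq_abs, abs_mul]
    calc |v x| * |f x| ≤ |v x| * Kb := mul_le_mul_of_nonneg_left (hfb x) (abs_nonneg _)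
      _ = Kb * |v x| := mul_comm _ _
  have hvf_le : ∫ x, v x * f x ≤ Kb * ∫ x, v x := by
    calc ∫ x, v x * f x ≤ ∫ x, Kb * v x := by
          refine integral_mono hIvf (hIv.const_mul Kb) fun x => ?_
          calc v x * f x ≤ v x * Kb :=
                mul_le_mul_of_nonneg_left (le_trans (le_abs_self _) (hfb x)) (hvnn x)
            _ = Kb * v x := mul_comm _ _
      _ = Kb * ∫ x, v x := integral_const_mul Kb v
  have hvint_nonneg : 0 ≤ ∫ x, v x := integral_nonneg hvnn
  have hv2_nonneg : 0 ≤ ∫ x, v x ^ 2 := integral_nonneg fun x => sq_nonneg _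
  have hKbt : Kb = (mr - lam) * t := by
    rw [htdef]; field_simp
  have hv2_zero : ∫ x, v x ^ 2 = 0 := by
    have h1 : (mr - lam) * ((∫ x, v x ^ 2) + t * ∫ x, v x) ≤ (mr - lam) * (t * ∫ x, v x) := by
      calc (mr - lam) * ((∫ x, v x ^ 2) + t * ∫ x, v x) ≤ Kb * ∫ x, v x := by
            rw [← hsum]; exact le_trans hle1 hvf_le
        _ = (mr - lam) * (t * ∫ x, v x) := by rw [hKbt]; ring
    nlinarith
  have hv_zero : ∀ᵐ x ∂(volume : Measure (Euc N)), v x ^ 2 = 0 := by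
    have h2 := (integral_eq_zero_iff_of_nonneg (fun x => sq_nonneg (v x)) hIv2).mp hv2_zero
    filter_upwards [h2] with x hx
    exact hx
  filter_upwards [hv_zero] with x hx
  have hvx : v x = 0 := by
    have := sq_eq_zero_iff.mp hx
    exact this
  by_contra hcon
  push_neg at hcon
  have : v x = u x - t := max_eq_left (by linarith)
  rw [hvx] at this
  linarith

/-- boundedness of Dirichlet eigenfunctions. -/
theorem eigenfunction_bounded
    {N : ℕ} (hN : 0 < N) (j : Euc N → ℝ)
    (hjm : Measurable j) (hj0 : ∀ z, 0 ≤ j z) (hje : ∀ z, j (-z) = j z)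
    (hjint : (∫⁻ z, ENNReal.ofReal (min 1 (‖z‖ ^ 2) * j z)) < ⊤)
    (hjinf : (∫⁻ z, ENNReal.ofReal (j z)) = ⊤)
    (hjsq : ∀ r R : ℝ, 0 < r → r < R →
      (∫⁻ z in Metric.ball (0 : Euc N) R \ Metric.ball (0 : Euc N) r,
        ENNReal.ofReal (j z ^ 2)) < ⊤)
    (Ω : Set (Euc N)) (hΩo : IsOpen Ω) (hΩb : Bornology.IsBounded Ω)
    (lam : ℝ) (hlam : 0 < lam) :
    ∃ C > (0:ℝ), ∀ u : Euc N → ℝ, MemDJZero j Ω u →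
      (∀ v : Euc N → ℝ, MemDJZero j Ω v → bJ j u v = lam * ∫ x in Ω, u x * v x) →
      (MemLp u ⊤ (volume.restrict Ω) ∧
        eLpNorm u ⊤ (volume.restrict Ω) ≤
          ENNReal.ofReal C * eLpNorm u 2 (volume.restrict Ω)) := by
  classical
  haveI : Nontrivial (Euc N) := ⟨EuclideanSpace.single ⟨0, hN⟩ 1, 0, by
    intro h
    have := congrArg (fun f : Euc N => f ⟨0, hN⟩) h
    simp [EuclideanSpace.single_apply] at this⟩
  -- the complement of the unit ball has finite j-mass
  have hcompl : (∫⁻ z in (ball (0 : Euc N) 1)ᶜ, ENNReal.ofReal (j z)) ≠ ⊤ := by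
    have hle : (∫⁻ z in (ball (0 : Euc N) 1)ᶜ, ENNReal.ofReal (j z))
        ≤ ∫⁻ z, ENNReal.ofReal (min 1 (‖z‖ ^ 2) * j z) := by
      refine le_trans (setLIntegral_mono
        ((((measurable_const.min (measurable_norm.pow_const 2)).mul hjm)).ennreal_ofReal)
        fun z hz => ?_) (setLIntegral_le_lintegral _ _)
      have h1 : (1:ℝ) ≤ ‖z‖ := by
        simp only [mem_compl_iff, mem_ball, dist_zero_right, not_lt] at hz
        exact hz
      have h2 : min 1 (‖z‖ ^ 2) = 1 := min_eq_left (by nlinarith)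
      simp only [Pi.mul_apply]
      rw [h2, one_mul]
    exact (lt_of_le_of_lt hle hjint).ne
  have hball : (∫⁻ z in ball (0 : Euc N) 1, ENNReal.ofReal (j z)) = ⊤ := by
    by_contra h
    have h2 : (∫⁻ z, ENNReal.ofReal (j z) ∂(volume : Measure (Euc N))) ≠ ⊤ := by
      rw [← lintegral_add_compl (fun z => ENNReal.ofReal (j z)) measurableSet_ball]
      exact ENNReal.add_ne_top.mpr ⟨h, hcompl⟩
    exact h2 hjinf
  -- monotone exhaustion of the punctured ball
  set s : ℕ → Set (Euc N) := fun n => ball (0 : Euc N) 1 \ ball 0 (1/(n+1)) with hsdef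
  have hsm : ∀ n, MeasurableSet (s n) := fun n => measurableSet_ball.diff measurableSet_ball
  have hsup : (⨆ n, ∫⁻ z in s n, ENNReal.ofReal (j z)) = ⊤ := by
    set F : ℕ → Euc N → ℝ≥0∞ := fun n => (s n).indicator fun z => ENNReal.ofReal (j z) with hFdef
    have hFm : ∀ n, Measurable (F n) := fun n => hjm.ennreal_ofReal.indicator (hsm n)
    have hFmono : Monotone F := by
      intro a b hab
      refine Set.indicator_le_indicator_of_subset (diff_subset_diff_right
        (ball_subset_ball ?_)) (fun z => zero_le)
      exact one_div_le_one_div_of_le (by positivity) (by exact_mod_cast by linarith : (a:ℝ)+1 ≤ (b:ℝ)+1)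
    have hU : ⋃ n, s n = ball (0 : Euc N) 1 \ {0} := by
      apply Subset.antisymm
      · refine iUnion_subset fun n => diff_subset_diff_right ?_
        simp only [singleton_subset_iff]
        exact mem_ball_self (by positivity)
      · rintro z ⟨hz1, hz0⟩
        have hpos : 0 < ‖z‖ := norm_pos_iff.mpr (by simpa using hz0)
        obtain ⟨n, hn⟩ := exists_nat_one_div_lt hpos
        refine mem_iUnion.mpr ⟨n, hz1, ?_⟩
        simp only [mem_ball, dist_zero_right, not_lt]
        exact hn.le
    have hsupF : ∀ z, (⨆ n, F n z) = (ball (0 : Euc N) 1 \ {0}).indicator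
        (fun z => ENNReal.ofReal (j z)) z := by
      intro z
      simp only [hFdef]
      by_cases hz : z ∈ ball (0 : Euc N) 1 \ {0}
      · rw [Set.indicator_of_mem hz]
        rw [← hU] at hz
        obtain ⟨n, hn⟩ := mem_iUnion.mp hz
        apply le_antisymm
        · exact iSup_le fun m => Set.indicator_le_self' (fun _ _ => zero_le) z
        · exact le_trans (le_of_eq (Set.indicator_of_mem hn (fun z => ENNReal.ofReal (j z))).symm)
            (le_iSup (fun m => (s m).indicator (fun z => ENNReal.ofReal (j z)) z) n)
      · rw [Set.indicator_of_notMem hz]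
        rw [← hU] at hz
        refine le_antisymm (iSup_le fun n => ?_) zero_le
        rw [Set.indicator_of_notMem (fun hmem => hz (mem_iUnion.mpr ⟨n, hmem⟩))]
    have hpunct : (∫⁻ z in ball (0 : Euc N) 1 \ {0}, ENNReal.ofReal (j z)) = ⊤ := by
      rw [setLIntegral_congr (diff_null_ae_eq_self (measure_singleton (0 : Euc N)))]
      exact hball
    calc (⨆ n, ∫⁻ z in s n, ENNReal.ofReal (j z))
        = ⨆ n, ∫⁻ z, F n z := by
          refine iSup_congr fun n => ?_
          rw [hFdef]
          exact (lintegral_indicator (hsm n) _).symm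
      _ = ∫⁻ z, ⨆ n, F n z := (lintegral_iSup hFm hFmono).symm
      _ = ∫⁻ z, (ball (0 : Euc N) 1 \ {0}).indicator (fun z => ENNReal.ofReal (j z)) z := by
          exact lintegral_congr hsupF
      _ = ∫⁻ z in ball (0 : Euc N) 1 \ {0}, ENNReal.ofReal (j z) :=
          lintegral_indicator (measurableSet_ball.diff (measurableSet_singleton _)) _
      _ = ⊤ := hpunct
  have hex : ∃ n : ℕ, ENNReal.ofReal lam < ∫⁻ z in s n, ENNReal.ofReal (j z) := by
    rw [← lt_iSup_iff, hsup]
    exact ofReal_lt_top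
  obtain ⟨n, hn⟩ := hex
  set r : ℝ := 1/(n+2) with hrdef
  have hr0 : 0 < r := by positivity
  have hr1 : r < 1 := by
    rw [hrdef]
    rw [div_lt_one (by positivity)]
    linarith [Nat.cast_nonneg (α := ℝ) n]
  set ann := ball (0 : Euc N) 1 \ ball 0 r with hanndef
  have hannm : MeasurableSet ann := measurableSet_ball.diff measurableSet_ball
  have hsub : s n ⊆ ann := by
    refine diff_subset_diff_right (ball_subset_ball ?_)
    rw [hrdef]
    refine one_div_le_one_div_of_le (by positivity) (by push_cast; linarith)
  set jmf := ann.indicator j with hjmfdef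
  have hmmeas : Measurable jmf := hjm.indicator hannm
  have hm0 : ∀ z, 0 ≤ jmf z := fun z => Set.indicator_nonneg (fun z _ => hj0 z) z
  have hmle : ∀ z, jmf z ≤ j z := fun z => Set.indicator_le_self' (fun z _ => hj0 z) z
  have hannsym : ∀ z : Euc N, -z ∈ ann ↔ z ∈ ann := by
    intro z
    simp only [hanndef, mem_diff, mem_ball, dist_zero_right, norm_neg]
  have hme : ∀ z, jmf (-z) = jmf z := by
    intro z
    simp only [hjmfdef]
    by_cases hz : z ∈ ann
    · rw [Set.indicator_of_mem hz, Set.indicator_of_mem ((hannsym z).mpr hz), hje]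
    · rw [Set.indicator_of_notMem hz,
        Set.indicator_of_notMem (fun h => hz ((hannsym z).mp h))]
  have hMeq : (∫⁻ z, ENNReal.ofReal (jmf z)) = ∫⁻ z in ann, ENNReal.ofReal (j z) := by
    have h1 : ∀ z, ENNReal.ofReal (jmf z) = ann.indicator (fun z => ENNReal.ofReal (j z)) z := by
      intro z
      by_cases hz : z ∈ ann <;> simp [hjmfdef, hz]
    simp_rw [h1]
    exact lintegral_indicator hannm _
  have hSeq : (∫⁻ z, ENNReal.ofReal (jmf z ^ 2)) = ∫⁻ z in ann, ENNReal.ofReal (j z ^ 2) := by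
    have h1 : ∀ z, ENNReal.ofReal (jmf z ^ 2)
        = ann.indicator (fun z => ENNReal.ofReal (j z ^ 2)) z := by
      intro z
      by_cases hz : z ∈ ann <;> simp [hjmfdef, hz]
    simp_rw [h1]
    exact lintegral_indicator hannm _
  have hSmfin : (∫⁻ z, ENNReal.ofReal (jmf z ^ 2)) ≠ ⊤ := by
    rw [hSeq]
    exact (hjsq r 1 hr0 hr1).ne
  have hMmfin : (∫⁻ z, ENNReal.ofReal (jmf z)) ≠ ⊤ := by
    rw [hMeq]
    have hpt : ∀ z, ENNReal.ofReal (j z) ≤ 1 + ENNReal.ofReal (j z ^ 2) := by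
      intro z
      rcases le_or_gt (j z) 1 with h | h
      · exact le_trans (ENNReal.ofReal_le_ofReal h) (by simp)
      · refine le_trans (ENNReal.ofReal_le_ofReal (by nlinarith : j z ≤ j z ^ 2)) (by simp)
    have h2 : (∫⁻ z in ann, ENNReal.ofReal (j z))
        ≤ ∫⁻ z in ann, (1 + ENNReal.ofReal (j z ^ 2)) := lintegral_mono fun z => hpt z
    have h3 : (∫⁻ z in ann, (1 + ENNReal.ofReal (j z ^ 2)))
        = volume ann + ∫⁻ z in ann, ENNReal.ofReal (j z ^ 2) := by
      rw [lintegral_add_left measurable_const]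
      simp
    refine ne_top_of_le_ne_top ?_ (h2.trans_eq h3)
    refine ENNReal.add_ne_top.mpr ⟨?_, (hjsq r 1 hr0 hr1).ne⟩
    exact (lt_of_le_of_lt (measure_mono diff_subset) measure_ball_lt_top).ne
  have hmlam : lam < (∫⁻ z, ENNReal.ofReal (jmf z)).toReal := by
    have h2 : ENNReal.ofReal lam < ∫⁻ z, ENNReal.ofReal (jmf z) := by
      rw [hMeq]
      exact lt_of_lt_of_le hn (lintegral_mono_set hsub)
    have h3 := (ENNReal.toReal_lt_toReal ofReal_ne_top hMmfin).mpr h2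
    rwa [ENNReal.toReal_ofReal hlam.le] at h3
  -- the constant
  set mr := (∫⁻ z, ENNReal.ofReal (jmf z)).toReal with hmrdef
  set Sm := ∫⁻ z, ENNReal.ofReal (jmf z ^ 2) with hSmdef
  have hml : 0 < mr - lam := by linarith
  set C : ℝ := (Sm ^ (1/2:ℝ)).toReal / (mr - lam) + 1 with hCdef
  have hC1 : 0 ≤ (Sm ^ (1/2:ℝ)).toReal / (mr - lam) :=
    div_nonneg ENNReal.toReal_nonneg hml.le
  refine ⟨C, by rw [hCdef]; linarith, ?_⟩
  intro u hu heq
  have hΩm : MeasurableSet Ω := hΩo.measurableSet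
  have hΩfin : volume Ω ≠ ⊤ := hΩb.measure_lt_top.ne
  -- apply one_side to u and -u
  have h1 := one_side j jmf hjm hj0 hmmeas hm0 hmle hme hMmfin hSmfin Ω hΩm hΩfin
    lam hlam hmlam u hu heq
  have huneg : MemDJZero j Ω (fun x => -u x) := by
    obtain ⟨hum, huL2, huQ, huZ⟩ := hu
    refine ⟨hum.neg, huL2.neg, ?_, ?_⟩
    · refine lt_of_le_of_lt (le_of_eq ?_) huQ
      unfold quadJ
      congr 1
      refine lintegral_congr fun x => lintegral_congr fun y => ?_
      congr 2
      ring
    · filter_upwards [huZ] with x hx hmem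
      rw [hx hmem, neg_zero]
  have heqneg : ∀ v, MemDJZero j Ω v →
      bJ j (fun x => -u x) v = lam * ∫ x in Ω, (fun x => -u x) x * v x := by
    intro v hv
    have h2 : bJ j (fun x => -u x) v = -(bJ j u v) := by
      unfold bJ
      have h3 : ∀ x : Euc N, (∫ y, ((fun x => -u x) x - (fun x => -u x) y) * (v x - v y) * j (x - y))
          = -∫ y, (u x - u y) * (v x - v y) * j (x - y) := by
        intro x
        rw [← integral_neg]
        refine integral_congr_ae (Eventually.of_forall fun y => ?_)
        ring
      simp_rw [h3]
      rw [integral_neg]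
      ring
    rw [h2, heq v hv]
    have h4 : ∫ x in Ω, (fun x => -u x) x * v x = -∫ x in Ω, u x * v x := by
      rw [← integral_neg]
      refine integral_congr_ae (Eventually.of_forall fun x => ?_)
      ring
    rw [h4]
    ring
  have h2 := one_side j jmf hjm hj0 hmmeas hm0 hmle hme hMmfin hSmfin Ω hΩm hΩfin
    lam hlam hmlam (fun x => -u x) huneg heqneg
  -- combine
  set Su := ∫⁻ y, ENNReal.ofReal (u y ^ 2) with hSudef
  have hSueq : (∫⁻ y, ENNReal.ofReal ((fun x => -u x) y ^ 2)) = Su := by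
    refine lintegral_congr fun y => ?_
    rw [neg_sq]
  rw [hSueq] at h2
  set t : ℝ := ((Su ^ (1/2:ℝ) * Sm ^ (1/2:ℝ)).toReal) / (mr - lam) with htdef
  have habs : ∀ᵐ x ∂(volume : Measure (Euc N)), |u x| ≤ t := by
    filter_upwards [h1, h2] with x hx1 hx2
    rw [abs_le]
    constructor
    · linarith [hx2]
    · exact hx1
  have hSufin : Su ≠ ⊤ := sq_lintegral_ne_top hu.2.1
  have habsΩ : ∀ᵐ x ∂(volume.restrict Ω), ‖u x‖ ≤ t :=
    ae_restrict_of_ae (habs.mono fun x h => by rwa [Real.norm_eq_abs])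
  have hbound : eLpNorm u ⊤ (volume.restrict Ω) ≤ ENNReal.ofReal t := by
    rw [eLpNorm_exponent_top]
    exact eLpNormEssSup_le_of_ae_bound habsΩ
  -- identify the L² norm on Ω
  have hSuΩ : (∫⁻ y, ENNReal.ofReal (u y ^ 2) ∂(volume.restrict Ω)) = Su := by
    have hc : (∫⁻ y in Ωᶜ, ENNReal.ofReal (u y ^ 2)) = 0 := by
      have hz : ∀ᵐ y ∂(volume.restrict Ωᶜ), ENNReal.ofReal (u y ^ 2) = 0 := by
        rw [ae_restrict_iff' hΩm.compl]
        filter_upwards [hu.2.2.2] with y hy hmem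
        rw [hy hmem]
        simp
      calc (∫⁻ y in Ωᶜ, ENNReal.ofReal (u y ^ 2)) = ∫⁻ _y in Ωᶜ, 0 := lintegral_congr_ae hz
        _ = 0 := by simp
    have := lintegral_add_compl (fun y => ENNReal.ofReal (u y ^ 2)) hΩm
      (μ := (volume : Measure (Euc N)))
    rw [hc, add_zero] at this
    exact this
  have hnorm2 : eLpNorm u 2 (volume.restrict Ω) = Su ^ (1/2:ℝ) := by
    rw [eLpNorm_two_eq u (volume.restrict Ω), hSuΩ]
  refine ⟨⟨hu.2.1.aestronglyMeasurable.restrict, ?_⟩, ?_⟩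
  · rw [eLpNorm_exponent_top]
    exact lt_of_le_of_lt (eLpNormEssSup_le_of_ae_bound habsΩ) ofReal_lt_top
  · refine le_trans hbound ?_
    rw [hnorm2]
    have ht_eq : t = ((Sm ^ (1/2:ℝ)).toReal / (mr - lam)) * (Su ^ (1/2:ℝ)).toReal := by
      rw [htdef, ENNReal.toReal_mul]
      ring
    rw [ht_eq, ENNReal.ofReal_mul (div_nonneg ENNReal.toReal_nonneg hml.le),
      ENNReal.ofReal_toReal (ENNReal.rpow_ne_top_of_nonneg (by norm_num) hSufin)]
    refine mul_le_mul_left (ENNReal.ofReal_le_ofReal ?_) _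
    rw [hCdef]
    linarith
end EigenfunctionBoundedProof
end
end

section
/- Let q ∈ L¹(ℝ^N) be nonnegative and even with q = 0 almost everywhere on ℝ^N∖B_r(0) for some r > 0. Let Ω ⊆ ℝ^N be open and x₀ ∈ Ω with B_{2r}(x₀) ⊆ Ω, and let u : Ω → ℝ be measurable. Then, with (q∗q)(z) = ∫_{ℝ^N} q(z−w)q(w) dw, one has (1/2)∫_{B_r(x₀)}∫_{B_r(x₀)} (u(x)−u(y))² (q∗q)(x−y) dx dy ≤ 4 ‖q‖_{L¹(ℝ^N)} · (1/2)∫_Ω∫_Ω (u(x)−u(y))² q(x−y) dx dy. -/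
open MeasureTheory ENNReal Metric Set Filter

noncomputable section

private theorem convolution_inequality_aux
    {N : ℕ} (q : Euc N → ℝ) (hqm : Measurable q)
    (hq : Integrable q volume) (hq0 : ∀ z, 0 ≤ q z)
    (r : ℝ) (hr : 0 < r)
    (hqs : ∀ᵐ z ∂(volume : Measure (Euc N)), z ∉ Metric.ball (0 : Euc N) r → q z = 0)
    (Ω : Set (Euc N)) (hΩo : IsOpen Ω) (x₀ : Euc N)
    (hball : Metric.ball x₀ (2 * r) ⊆ Ω)
    (u : Euc N → ℝ) (hu : Measurable u) :
    quadJ (fun z => ∫ w, q (z - w) * q w) (Metric.ball x₀ r) u ≤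
      ENNReal.ofReal (4 * ∫ z, q z) * quadJ q Ω u := by
  set B := Metric.ball x₀ r with hB
  have hBΩ : B ⊆ Ω := (Metric.ball_subset_ball (by linarith)).trans hball
  set Q : Euc N → ℝ≥0∞ := fun z => ENNReal.ofReal (q z) with hQdef
  set F : Euc N → Euc N → ℝ≥0∞ := fun a b => ENNReal.ofReal ((u a - u b) ^ 2) with hFdef
  set I : ℝ≥0∞ := ∫⁻ z, Q z with hIdef
  have hI' : ENNReal.ofReal (∫ z, q z) = I :=
    ofReal_integral_eq_lintegral_ofReal hq (ae_of_all _ hq0)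
  have hItop : I ≠ ⊤ := hI' ▸ ENNReal.ofReal_ne_top
  -- measurability
  have hQm : Measurable Q := hqm.ennreal_ofReal
  have mF : Measurable fun p : Euc N × Euc N => F p.1 p.2 :=
    (((hu.comp measurable_fst).sub (hu.comp measurable_snd)).pow_const 2).ennreal_ofReal
  have mQ2 : Measurable fun p : Euc N × Euc N => Q (p.1 - p.2) :=
    hQm.comp (measurable_fst.sub measurable_snd)
  have mFQ : Measurable fun p : Euc N × Euc N => F p.1 p.2 * Q (p.1 - p.2) := mF.mul mQ2
  have mFQ' : Measurable fun p : Euc N × Euc N => F p.2 p.1 * Q (p.2 - p.1) :=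
    (mF.comp (measurable_snd.prodMk measurable_fst)).mul
      (hQm.comp (measurable_snd.sub measurable_fst))
  set P : Euc N → Euc N → Euc N → ℝ≥0∞ := fun x y z => F x z * Q (x - z) * Q (z - y) with hPdef
  set R : Euc N → Euc N → Euc N → ℝ≥0∞ := fun x y z => F z y * Q (x - z) * Q (z - y) with hRdef
  have mP : Measurable fun p : (Euc N × Euc N) × Euc N => P p.1.1 p.1.2 p.2 :=
    ((mF.comp ((measurable_fst.comp measurable_fst).prodMk measurable_snd)).mul
        (hQm.comp ((measurable_fst.comp measurable_fst).sub measurable_snd))).mul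
      (hQm.comp (measurable_snd.sub (measurable_snd.comp measurable_fst)))
  have mR : Measurable fun p : (Euc N × Euc N) × Euc N => R p.1.1 p.1.2 p.2 :=
    ((mF.comp (measurable_snd.prodMk (measurable_snd.comp measurable_fst))).mul
        (hQm.comp ((measurable_fst.comp measurable_fst).sub measurable_snd))).mul
      (hQm.comp (measurable_snd.sub (measurable_snd.comp measurable_fst)))
  -- pointwise convolution bound
  have conv_le : ∀ x y : Euc N,
      ENNReal.ofReal (∫ w, q (x - y - w) * q w) ≤ ∫⁻ z, Q (x - z) * Q (z - y) := by
    intro x y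
    have h2 : (∫⁻ w, ENNReal.ofReal (q (x - y - w) * q w)) = ∫⁻ z, Q (x - z) * Q (z - y) := by
      calc (∫⁻ w, ENNReal.ofReal (q (x - y - w) * q w))
          = ∫⁻ w, Q (x - (w + y)) * Q (w + y - y) := by
            refine lintegral_congr fun w => ?_
            have e1 : x - (w + y) = x - y - w := by abel
            have e2 : w + y - y = w := by abel
            rw [e1, e2, ENNReal.ofReal_mul (hq0 _)]
        _ = ∫⁻ z, Q (x - z) * Q (z - y) :=
            lintegral_add_right_eq_self (fun z => Q (x - z) * Q (z - y)) y
    rw [← h2]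
    by_cases hi : Integrable (fun w => q (x - y - w) * q w) volume
    · exact le_of_eq (ofReal_integral_eq_lintegral_ofReal hi
        (ae_of_all _ fun w => mul_nonneg (hq0 _) (hq0 _)))
    · rw [integral_undef hi]; simp
  -- localization lemmas
  have loc1 : ∀ x ∈ B, (∫⁻ z, F x z * Q (x - z)) ≤ ∫⁻ z in Ω, F x z * Q (x - z) := by
    intro x hx
    have h1 : ∀ᵐ z ∂(volume : Measure (Euc N)), x - z ∉ Metric.ball (0 : Euc N) r → q (x - z) = 0 :=
      (Measure.measurePreserving_sub_left volume x).quasiMeasurePreserving.ae hqs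
    have heq : (∫⁻ z, F x z * Q (x - z)) =
        ∫⁻ z, Ω.indicator (fun z => F x z * Q (x - z)) z := by
      refine lintegral_congr_ae ?_
      filter_upwards [h1] with z hz
      by_cases hzΩ : z ∈ Ω
      · rw [Set.indicator_of_mem hzΩ]
      · rw [Set.indicator_of_notMem hzΩ]
        have hq0' : q (x - z) = 0 := by
          apply hz
          intro hmem
          rw [mem_ball_zero_iff] at hmem
          apply hzΩ
          apply hball
          rw [mem_ball]
          calc dist z x₀ ≤ dist z x + dist x x₀ := dist_triangle _ _ _
            _ < r + r := by
                have : dist z x = ‖x - z‖ := by rw [dist_comm, dist_eq_norm]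
                rw [this]
                exact add_lt_add hmem (mem_ball.mp hx)
            _ = 2 * r := by ring
        simp [hQdef, hq0']
    rw [heq, lintegral_indicator hΩo.measurableSet]
  have loc2 : ∀ y ∈ B, (∫⁻ z, F z y * Q (z - y)) ≤ ∫⁻ z in Ω, F z y * Q (z - y) := by
    intro y hy
    have h1 : ∀ᵐ z ∂(volume : Measure (Euc N)), z - y ∉ Metric.ball (0 : Euc N) r → q (z - y) = 0 :=
      (measurePreserving_sub_right volume y).quasiMeasurePreserving.ae hqs
    have heq : (∫⁻ z, F z y * Q (z - y)) =
        ∫⁻ z, Ω.indicator (fun z => F z y * Q (z - y)) z := by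
      refine lintegral_congr_ae ?_
      filter_upwards [h1] with z hz
      by_cases hzΩ : z ∈ Ω
      · rw [Set.indicator_of_mem hzΩ]
      · rw [Set.indicator_of_notMem hzΩ]
        have hq0' : q (z - y) = 0 := by
          apply hz
          intro hmem
          rw [mem_ball_zero_iff] at hmem
          apply hzΩ
          apply hball
          rw [mem_ball]
          calc dist z x₀ ≤ dist z y + dist y x₀ := dist_triangle _ _ _
            _ < r + r := by
                have : dist z y = ‖z - y‖ := dist_eq_norm _ _
                rw [this]
                exact add_lt_add hmem (mem_ball.mp hy)
            _ = 2 * r := by ring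
        simp [hQdef, hq0']
    rw [heq, lintegral_indicator hΩo.measurableSet]
  set D : ℝ≥0∞ := ∫⁻ x in Ω, ∫⁻ y in Ω, F x y * Q (x - y) with hDdef
  set T1 : ℝ≥0∞ := ∫⁻ x in B, ∫⁻ y in B, ∫⁻ z, P x y z with hT1def
  set T2 : ℝ≥0∞ := ∫⁻ x in B, ∫⁻ y in B, ∫⁻ z, R x y z with hT2def
  -- T1 bound
  have hT1 : T1 ≤ I * D := by
    have step_xy : ∀ x ∈ B, (∫⁻ y in B, ∫⁻ z, P x y z) ≤ I * ∫⁻ z in Ω, F x z * Q (x - z) := by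
      intro x hx
      have hm1 : Measurable fun p : Euc N × Euc N => P x p.1 p.2 := by
        exact ((((measurable_const.sub (hu.comp measurable_snd)).pow_const 2).ennreal_ofReal).mul
            (hQm.comp (measurable_const.sub measurable_snd))).mul
          (hQm.comp (measurable_snd.sub measurable_fst))
      have mswap : AEMeasurable (Function.uncurry fun y z => P x y z)
          ((volume.restrict B).prod volume) := hm1.aemeasurable
      calc (∫⁻ y in B, ∫⁻ z, P x y z) = ∫⁻ z, ∫⁻ y in B, P x y z :=
            lintegral_lintegral_swap mswap
        _ = ∫⁻ z, (F x z * Q (x - z)) * ∫⁻ y in B, Q (z - y) := by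
            refine lintegral_congr fun z => ?_
            rw [← lintegral_const_mul' _ _ (ENNReal.mul_ne_top ofReal_ne_top ofReal_ne_top)]
        _ ≤ ∫⁻ z, (F x z * Q (x - z)) * I := by
            refine lintegral_mono fun z => mul_le_mul_right ?_ _
            calc (∫⁻ y in B, Q (z - y)) ≤ ∫⁻ y, Q (z - y) := setLIntegral_le_lintegral _ _
              _ = I := (Measure.measurePreserving_sub_left volume z).lintegral_comp hQm
        _ = I * ∫⁻ z, F x z * Q (x - z) := by
            rw [lintegral_mul_const' I _ hItop, mul_comm]
        _ ≤ I * ∫⁻ z in Ω, F x z * Q (x - z) := mul_le_mul_right (loc1 x hx) _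
    calc T1 ≤ ∫⁻ x in B, I * ∫⁻ z in Ω, F x z * Q (x - z) :=
          setLIntegral_mono' measurableSet_ball step_xy
      _ = I * ∫⁻ x in B, ∫⁻ z in Ω, F x z * Q (x - z) := lintegral_const_mul' I _ hItop
      _ ≤ I * ∫⁻ x in Ω, ∫⁻ z in Ω, F x z * Q (x - z) :=
          mul_le_mul_right (lintegral_mono_set hBΩ) _
      _ = I * D := rfl
  -- T2 bound
  have hT2 : T2 ≤ I * D := by
    set H : Euc N → ℝ≥0∞ := fun z => ∫⁻ y in B, F z y * Q (z - y) with hHdef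
    have mH : Measurable H := mFQ.lintegral_prod_right'
    have step1 : ∀ x, (∫⁻ y in B, ∫⁻ z, R x y z) = ∫⁻ z, Q (x - z) * H z := by
      intro x
      have hm1 : Measurable fun p : Euc N × Euc N => R x p.1 p.2 := by
        exact ((((hu.comp measurable_snd).sub (hu.comp measurable_fst)).pow_const 2).ennreal_ofReal.mul
            (hQm.comp (measurable_const.sub measurable_snd))).mul
          (hQm.comp (measurable_snd.sub measurable_fst))
      have mswap : AEMeasurable (Function.uncurry fun y z => R x y z)
          ((volume.restrict B).prod volume) := hm1.aemeasurable
      calc (∫⁻ y in B, ∫⁻ z, R x y z) = ∫⁻ z, ∫⁻ y in B, R x y z :=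
            lintegral_lintegral_swap mswap
        _ = ∫⁻ z, Q (x - z) * H z := by
            refine lintegral_congr fun z => ?_
            rw [hHdef, ← lintegral_const_mul' _ _ ofReal_ne_top]
            exact lintegral_congr fun y => by simp only [hRdef]; ring
    have step2 : T2 = ∫⁻ z, (∫⁻ x in B, Q (x - z)) * H z := by
      have mswap : AEMeasurable (Function.uncurry fun x z => Q (x - z) * H z)
          ((volume.restrict B).prod volume) :=
        (mQ2.mul (mH.comp measurable_snd)).aemeasurable
      calc T2 = ∫⁻ x in B, ∫⁻ z, Q (x - z) * H z := lintegral_congr fun x => step1 x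
        _ = ∫⁻ z, ∫⁻ x in B, Q (x - z) * H z := lintegral_lintegral_swap mswap
        _ = ∫⁻ z, (∫⁻ x in B, Q (x - z)) * H z := by
            refine lintegral_congr fun z => ?_
            exact lintegral_mul_const _ (hQm.comp (measurable_id.sub measurable_const))
    have step3 : T2 ≤ I * ∫⁻ z, H z := by
      rw [step2, ← lintegral_const_mul' I H hItop]
      refine lintegral_mono fun z => mul_le_mul_left ?_ _
      calc (∫⁻ x in B, Q (x - z)) ≤ ∫⁻ x, Q (x - z) := setLIntegral_le_lintegral _ _
        _ = I := lintegral_sub_right_eq_self Q z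
    have step4 : (∫⁻ z, H z) ≤ D := by
      have mswap : AEMeasurable (Function.uncurry fun z y => F z y * Q (z - y))
          (volume.prod (volume.restrict B)) := mFQ.aemeasurable
      have mswap2 : AEMeasurable (Function.uncurry fun y z => F z y * Q (z - y))
          ((volume.restrict Ω).prod (volume.restrict Ω)) := mFQ'.aemeasurable
      calc (∫⁻ z, H z) = ∫⁻ y in B, ∫⁻ z, F z y * Q (z - y) :=
            lintegral_lintegral_swap mswap
        _ ≤ ∫⁻ y in B, ∫⁻ z in Ω, F z y * Q (z - y) :=
            setLIntegral_mono' measurableSet_ball loc2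
        _ ≤ ∫⁻ y in Ω, ∫⁻ z in Ω, F z y * Q (z - y) := lintegral_mono_set hBΩ
        _ = ∫⁻ z in Ω, ∫⁻ y in Ω, F z y * Q (z - y) := lintegral_lintegral_swap mswap2
        _ = D := rfl
    exact step3.trans (mul_le_mul_right step4 I)
  -- pointwise bound for the main integrand
  have ptwise : ∀ x y : Euc N,
      ENNReal.ofReal ((u x - u y) ^ 2 * ∫ w, q (x - y - w) * q w) ≤
        ∫⁻ z, (2 * P x y z + 2 * R x y z) := by
    intro x y
    calc ENNReal.ofReal ((u x - u y) ^ 2 * ∫ w, q (x - y - w) * q w)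
        = F x y * ENNReal.ofReal (∫ w, q (x - y - w) * q w) :=
          ENNReal.ofReal_mul (sq_nonneg _)
      _ ≤ F x y * ∫⁻ z, Q (x - z) * Q (z - y) := mul_le_mul_right (conv_le x y) _
      _ = ∫⁻ z, F x y * (Q (x - z) * Q (z - y)) :=
          (lintegral_const_mul' _ _ ofReal_ne_top).symm
      _ ≤ ∫⁻ z, (2 * P x y z + 2 * R x y z) := by
          refine lintegral_mono fun z => ?_
          have hsq : (u x - u y) ^ 2 ≤ 2 * (u x - u z) ^ 2 + 2 * (u z - u y) ^ 2 := by
            nlinarith [sq_nonneg (u x - 2 * u z + u y)]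
          have hFle : F x y ≤ 2 * F x z + 2 * F z y := by
            calc F x y ≤ ENNReal.ofReal (2 * (u x - u z) ^ 2 + 2 * (u z - u y) ^ 2) :=
                  ENNReal.ofReal_le_ofReal hsq
              _ = 2 * F x z + 2 * F z y := by
                  rw [ENNReal.ofReal_add (by positivity) (by positivity),
                    ENNReal.ofReal_mul (by norm_num), ENNReal.ofReal_mul (by norm_num)]
                  norm_num
                  rfl
          calc F x y * (Q (x - z) * Q (z - y))
              ≤ (2 * F x z + 2 * F z y) * (Q (x - z) * Q (z - y)) :=
                mul_le_mul_left hFle _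
            _ = 2 * P x y z + 2 * R x y z := by rw [hPdef, hRdef]; ring
  -- splitting the sum
  have msum1 : Measurable fun p : Euc N × Euc N => ∫⁻ z, P p.1 p.2 z :=
    mP.lintegral_prod_right'
  have msum2 : Measurable fun p : Euc N × Euc N => ∫⁻ z, R p.1 p.2 z :=
    mR.lintegral_prod_right'
  have split : (∫⁻ x in B, ∫⁻ y in B, ∫⁻ z, (2 * P x y z + 2 * R x y z)) =
      2 * T1 + 2 * T2 := by
    have inner : ∀ x y : Euc N, (∫⁻ z, (2 * P x y z + 2 * R x y z)) =
        2 * (∫⁻ z, P x y z) + 2 * (∫⁻ z, R x y z) := by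
      intro x y
      have hm : Measurable fun z => 2 * P x y z := by
        exact measurable_const.mul
          (((((measurable_const.sub hu).pow_const 2).ennreal_ofReal).mul
              (hQm.comp (measurable_const.sub measurable_id))).mul
            (hQm.comp (measurable_id.sub measurable_const)))
      rw [lintegral_add_left hm _,
        lintegral_const_mul' _ _ (by norm_num), lintegral_const_mul' _ _ (by norm_num)]
    have middle : ∀ x : Euc N, (∫⁻ y in B, (2 * (∫⁻ z, P x y z) + 2 * (∫⁻ z, R x y z))) =
        2 * (∫⁻ y in B, ∫⁻ z, P x y z) + 2 * (∫⁻ y in B, ∫⁻ z, R x y z) := by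
      intro x
      have hm1 : Measurable fun p : Euc N × Euc N => P x p.1 p.2 := by
        exact ((((measurable_const.sub (hu.comp measurable_snd)).pow_const 2).ennreal_ofReal).mul
            (hQm.comp (measurable_const.sub measurable_snd))).mul
          (hQm.comp (measurable_snd.sub measurable_fst))
      have hm : Measurable fun y => 2 * ∫⁻ z, P x y z := by
        exact measurable_const.mul hm1.lintegral_prod_right'
      rw [lintegral_add_left hm _,
        lintegral_const_mul' _ _ (by norm_num), lintegral_const_mul' _ _ (by norm_num)]
    calc (∫⁻ x in B, ∫⁻ y in B, ∫⁻ z, (2 * P x y z + 2 * R x y z))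
        = ∫⁻ x in B, (2 * (∫⁻ y in B, ∫⁻ z, P x y z) + 2 * (∫⁻ y in B, ∫⁻ z, R x y z)) := by
          refine lintegral_congr fun x => ?_
          rw [← middle x]
          exact lintegral_congr fun y => inner x y
      _ = 2 * T1 + 2 * T2 := by
          have hm : Measurable fun x => 2 * ∫⁻ y in B, ∫⁻ z, P x y z := by
            exact measurable_const.mul (msum1.lintegral_prod_right' (ν := volume.restrict B))
          rw [lintegral_add_left hm _,
            lintegral_const_mul' _ _ (by norm_num), lintegral_const_mul' _ _ (by norm_num)]
  -- assemble
  have hLHS : quadJ (fun z => ∫ w, q (z - w) * q w) B u ≤ (1 / 2) * (2 * T1 + 2 * T2) := by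
    rw [quadJ]
    refine mul_le_mul_right ?_ _
    rw [← split]
    refine lintegral_mono fun x => lintegral_mono fun y => ?_
    exact ptwise x y
  have hquad : quadJ q Ω u = (1 / 2) * D := by
    rw [quadJ]
    congr 1
    refine lintegral_congr fun x => lintegral_congr fun y => ?_
    rw [ENNReal.ofReal_mul (sq_nonneg _)]
  have h42 : (4 : ℝ≥0∞) * (1 / 2) = 2 := by
    rw [show (4 : ℝ≥0∞) = 2 * 2 by norm_num, one_div, mul_assoc,
      ENNReal.mul_inv_cancel (by norm_num) (by norm_num), mul_one]
  have hRHS : ENNReal.ofReal (4 * ∫ z, q z) * quadJ q Ω u = 2 * (I * D) := by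
    rw [ENNReal.ofReal_mul (by norm_num), hI', hquad]
    rw [show ENNReal.ofReal 4 = (4 : ℝ≥0∞) by norm_num]
    calc (4 : ℝ≥0∞) * I * ((1 / 2) * D) = (4 * (1 / 2)) * (I * D) := by ring
      _ = 2 * (I * D) := by rw [h42]
  rw [hRHS]
  refine hLHS.trans ?_
  calc (1 / 2 : ℝ≥0∞) * (2 * T1 + 2 * T2) ≤ (1 / 2) * (2 * (I * D) + 2 * (I * D)) := by
        gcongr
    _ = ((1 / 2) * 4) * (I * D) := by ring
    _ = 2 * (I * D) := by rw [mul_comm (1/2 : ℝ≥0∞) 4, h42]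

/-- the convolution inequality (Lemma `iterationlemma`). -/
theorem convolution_inequality
    {N : ℕ} (hN : 0 < N) (q : Euc N → ℝ)
    (hq : Integrable q volume) (hq0 : ∀ z, 0 ≤ q z) (hqe : ∀ z, q (-z) = q z)
    (r : ℝ) (hr : 0 < r)
    (hqs : ∀ᵐ z ∂(volume : Measure (Euc N)), z ∉ Metric.ball (0 : Euc N) r → q z = 0)
    (Ω : Set (Euc N)) (hΩo : IsOpen Ω) (x₀ : Euc N) (hx₀ : x₀ ∈ Ω)
    (hball : Metric.ball x₀ (2 * r) ⊆ Ω)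
    (u : Euc N → ℝ) (hu : Measurable u) :
    quadJ (fun z => ∫ w, q (z - w) * q w) (Metric.ball x₀ r) u ≤
      ENNReal.ofReal (4 * ∫ z, q z) * quadJ q Ω u := by
  -- replace `q` by a measurable, everywhere nonnegative, even representative
  set q1 : Euc N → ℝ := hq.1.mk q with hq1def
  have hq1m : Measurable q1 := hq.1.stronglyMeasurable_mk.measurable
  have h1 : ∀ᵐ z ∂(volume : Measure (Euc N)), q z = q1 z := hq.1.ae_eq_mk
  have h2 : ∀ᵐ z ∂(volume : Measure (Euc N)), q (-z) = q1 (-z) :=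
    (Measure.measurePreserving_neg volume).quasiMeasurePreserving.ae h1
  set q3 : Euc N → ℝ := fun z => min (max (q1 z) 0) (max (q1 (-z)) 0) with hq3def
  have hq3m : Measurable q3 :=
    (hq1m.max measurable_const).min ((hq1m.comp measurable_neg).max measurable_const)
  have hq30 : ∀ z, 0 ≤ q3 z := fun z => le_min (le_max_right _ _) (le_max_right _ _)
  have heq : q3 =ᵐ[(volume : Measure (Euc N))] q := by
    filter_upwards [h1, h2] with z e1 e2
    show min (max (q1 z) 0) (max (q1 (-z)) 0) = q z
    rw [← e1, ← e2, hqe z, max_eq_left (hq0 z), min_self]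
  have hq3int : Integrable q3 volume := hq.congr heq.symm
  have hq3s : ∀ᵐ z ∂(volume : Measure (Euc N)), z ∉ Metric.ball (0 : Euc N) r → q3 z = 0 := by
    filter_upwards [heq, hqs] with z e1 e2 hz
    rw [e1]; exact e2 hz
  -- the convolution kernels agree pointwise
  have e_conv : (fun z : Euc N => ∫ w, q (z - w) * q w) =
      fun z : Euc N => ∫ w, q3 (z - w) * q3 w := by
    funext v
    refine integral_congr_ae ?_
    have h3 : (fun w => q3 (v - w)) =ᵐ[(volume : Measure (Euc N))] fun w => q (v - w) :=
      (Measure.measurePreserving_sub_left volume v).quasiMeasurePreserving.ae_eq heq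
    filter_upwards [heq, h3] with w e1 e2
    rw [e1, e2]
  -- the quadratic forms agree
  have e_quad : quadJ q Ω u = quadJ q3 Ω u := by
    rw [quadJ, quadJ]
    congr 1
    refine lintegral_congr fun x => lintegral_congr_ae (ae_restrict_of_ae ?_)
    have h3 : (fun y => q3 (x - y)) =ᵐ[(volume : Measure (Euc N))] fun y => q (x - y) :=
      (Measure.measurePreserving_sub_left volume x).quasiMeasurePreserving.ae_eq heq
    filter_upwards [h3] with y e1
    rw [← e1]
  have e_int : (∫ z, q z) = ∫ z, q3 z := (integral_congr_ae heq).symm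
  rw [e_conv, e_quad, e_int]
  exact convolution_inequality_aux q3 hq3m hq3int hq30 r hr hq3s Ω hΩo x₀ hball u hu
end
end

section
/- Let σ ∈ (0,2] and let k be a kernel of order σ whose symmetric lower bound j satisfies ∫_{ℝ^N} j(z) dz = ∞. Let Ω ⊂ ℝ^N be open, bounded and connected, and let u ∈ L²(Ω) satisfy b_{k,Ω}(u) = 0. Then u is constant almost everywhere on Ω, i.e. there is c ∈ ℝ with u = c a.e. in Ω. -/
open MeasureTheory ENNReal Metric Set Filter

noncomputable section

open scoped Pointwise

namespace ZEC

variable {N : ℕ}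

lemma exists_point {α : Type*} [MeasurableSpace α] {μ : MeasureTheory.Measure α}
    {s : Set α} (hs : 0 < μ s) {P : α → Prop} (h : ∀ᵐ x ∂μ, P x) :
    ∃ x ∈ s, P x := by
  by_contra hc
  push_neg at hc
  exact absurd (measure_mono_null (fun x hx => hc x hx) (ae_iff.1 h)) hs.ne'

lemma key_pairs {k : Euc N → Euc N → ℝ} {Ω : Set (Euc N)} {u : Euc N → ℝ}
    (hkmeas : Measurable (fun p : Euc N × Euc N => k p.1 p.2))
    (hknn : ∀ x y, 0 ≤ k x y) (hum : Measurable u)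
    (hq : (∫⁻ x in Ω, ∫⁻ y in Ω, ENNReal.ofReal ((u x - u y) ^ 2 * k x y)) = 0) :
    ∀ᵐ x ∂(volume.restrict Ω), ∀ᵐ y ∂(volume.restrict Ω), ¬(0 < k x y ∧ u x ≠ u y) := by
  set f : Euc N → Euc N → ℝ≥0∞ := fun x y => ENNReal.ofReal ((u x - u y) ^ 2 * k x y) with hf
  have hfm : Measurable (Function.uncurry f) := by
    apply Measurable.ennreal_ofReal
    exact (((hum.comp measurable_fst).sub (hum.comp measurable_snd)).pow_const 2).mul hkmeas
  have houter : Measurable fun x => ∫⁻ y, f x y ∂(volume.restrict Ω) :=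
    hfm.lintegral_prod_right
  have h1 : (fun x => ∫⁻ y, f x y ∂(volume.restrict Ω)) =ᵐ[volume.restrict Ω] 0 :=
    (lintegral_eq_zero_iff houter).1 hq
  filter_upwards [h1] with x hx
  have hfxm : Measurable (f x) := hfm.comp (measurable_prodMk_left)
  have h2 : f x =ᵐ[volume.restrict Ω] 0 := (lintegral_eq_zero_iff hfxm).1 hx
  filter_upwards [h2] with y hy
  rintro ⟨hkpos, hne⟩
  have h3 : (u x - u y) ^ 2 * k x y ≤ 0 := ENNReal.ofReal_eq_zero.1 hy
  have hsub : u x - u y ≠ 0 := sub_ne_zero.2 hne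
  have h4 : 0 < (u x - u y) ^ 2 * k x y := mul_pos (by positivity) hkpos
  linarith

lemma ae_translate {P : Euc N → Prop} (a : Euc N)
    (h : ∀ᵐ x ∂(volume : Measure (Euc N)), P x) :
    ∀ᵐ x ∂(volume : Measure (Euc N)), P (x + a) := by
  rw [ae_iff] at h ⊢
  have heq : {x : Euc N | ¬ P (x + a)} = (fun x => x + a) ⁻¹' {x | ¬ P x} := rfl
  rw [heq, measure_preimage_add_right]
  exact h

lemma essInf_ae_le {α : Type*} [MeasurableSpace α] (μ : MeasureTheory.Measure α)
    (f : α → ℝ) (hf : ∀ x, 0 ≤ f x) : ∀ᵐ x ∂μ, essInf f μ ≤ f x :=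
  ae_essInf_le (isBoundedUnder_of ⟨0, fun x => hf x⟩)

/-- The set of good translation vectors. -/

def Good (k : Euc N → Euc N → ℝ) (Ω : Set (Euc N)) (u : Euc N → ℝ) : Set (Euc N) :=
  {z | ∀ᵐ x ∂(volume : Measure (Euc N)), x ∈ Ω → x + z ∈ Ω → u (x + z) = u x}

lemma good_neg {k : Euc N → Euc N → ℝ} {Ω : Set (Euc N)} {u : Euc N → ℝ}
    {z : Euc N} (hz : z ∈ Good k Ω u) : -z ∈ Good k Ω u := by
  have h := ae_translate (P := fun x => x ∈ Ω → x + z ∈ Ω → u (x + z) = u x) (-z) hz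
  filter_upwards [h] with y hy hy1 hy2
  have h3 : y + -z + z = y := by abel
  rw [h3] at hy
  exact (hy hy2 hy1).symm

/-- symLB bound: for every `z`, a.e. `x`, `symLB k z ≤ k x (x+z)`. -/

lemma symLB_le {k : Euc N → Euc N → ℝ} (hknn : ∀ x y, 0 ≤ k x y) (z : Euc N) :
    ∀ᵐ x ∂(volume : Measure (Euc N)), symLB k z ≤ k x (x + z) := by
  have h := essInf_ae_le (volume : Measure (Euc N))
    (fun x => min (k x (x + z)) (k x (x - z)))
    (fun x => le_min (hknn _ _) (hknn _ _))
  filter_upwards [h] with x hx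
  exact hx.trans (min_le_left _ _)

/-- a.e. z with positive symLB is a good vector. -/

lemma ae_good {k : Euc N → Euc N → ℝ} {Ω : Set (Euc N)} {u : Euc N → ℝ}
    (hΩo : IsOpen Ω)
    (hkmeas : Measurable (fun p : Euc N × Euc N => k p.1 p.2))
    (hknn : ∀ x y, 0 ≤ k x y) (hum : Measurable u)
    (hkey : ∀ᵐ x ∂(volume.restrict Ω), ∀ᵐ y ∂(volume.restrict Ω), ¬(0 < k x y ∧ u x ≠ u y)) :
    ∀ᵐ z ∂(volume : Measure (Euc N)), 0 < symLB k z → z ∈ Good k Ω u := by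
  -- the bad set of pairs
  set P : Set (Euc N × Euc N) :=
    {p | p.1 ∈ Ω ∧ p.2 ∈ Ω ∧ 0 < k p.1 p.2 ∧ u p.1 ≠ u p.2} with hP
  have hPmeas : MeasurableSet P := by
    refine ((hΩo.measurableSet.preimage measurable_fst).inter
      ((hΩo.measurableSet.preimage measurable_snd).inter ?_))
    exact (measurableSet_lt measurable_const hkmeas).inter
      (measurableSet_eq_fun (hum.comp measurable_fst) (hum.comp measurable_snd)).compl
  -- P is null for the product measure
  have hkey' : ∀ᵐ x ∂(volume : Measure (Euc N)), x ∈ Ω →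
      ∀ᵐ y ∂(volume : Measure (Euc N)), y ∈ Ω → ¬(0 < k x y ∧ u x ≠ u y) := by
    have := (ae_restrict_iff' hΩo.measurableSet).1
      (hkey.mono fun x hx => (ae_restrict_iff' hΩo.measurableSet).1 hx)
    exact this
  have hP0 : (volume.prod volume : Measure (Euc N × Euc N)) P = 0 := by
    rw [Measure.measure_prod_null hPmeas]
    filter_upwards [hkey'] with x hx
    by_cases hxΩ : x ∈ Ω
    · have : Prod.mk x ⁻¹' P = {y | y ∈ Ω ∧ 0 < k x y ∧ u x ≠ u y} := by
        ext y; simp [hP, hxΩ]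
      rw [this]
      have h2 := hx hxΩ
      rw [ae_iff] at h2
      convert h2 using 2
      ext y
      simp only [mem_setOf_eq, not_forall, Classical.not_imp, not_not]
      tauto
      rfl
    · have : Prod.mk x ⁻¹' P = ∅ := by
        ext y; simp [hP, hxΩ]
      simp [this]
  -- pull back under the shear (z, x) ↦ (x, x + z)
  have hmp := measurePreserving_prod_add_swap (volume : Measure (Euc N)) volume
  have hS0 : (volume.prod volume : Measure (Euc N × Euc N))
      ((fun p : Euc N × Euc N => (p.2, p.2 + p.1)) ⁻¹' P) = 0 := by
    rw [hmp.measure_preimage hPmeas.nullMeasurableSet]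
    exact hP0
  have hSmeas : MeasurableSet ((fun p : Euc N × Euc N => (p.2, p.2 + p.1)) ⁻¹' P) :=
    hPmeas.preimage (measurable_snd.prodMk (measurable_snd.add measurable_fst))
  have hsec := (Measure.measure_prod_null hSmeas).1 hS0
  filter_upwards [hsec] with z hz
  intro hzpos
  have hx2 := symLB_le hknn z
  have hz' : ∀ᵐ x ∂(volume : Measure (Euc N)), ¬ ((x, x + z) ∈ P) := by
    rw [ae_iff]
    have : {x : Euc N | ¬¬ (x, x + z) ∈ P} = Prod.mk z ⁻¹' ((fun p : Euc N × Euc N => (p.2, p.2 + p.1)) ⁻¹' P) := by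
      ext x
      simp only [mem_setOf_eq, not_not, mem_preimage]
    rw [this]
    exact hz
  filter_upwards [hz', hx2] with x hx1 hx2' hxΩ hxzΩ
  by_contra hne
  exact hx1 ⟨hxΩ, hxzΩ, lt_of_lt_of_le hzpos hx2', fun h => hne h.symm⟩

lemma exists_J {σ : ℝ} (hσ0 : 0 < σ) {k : Euc N → Euc N → ℝ} {C : ℝ}
    (hkmeas : Measurable (fun p : Euc N × Euc N => k p.1 p.2))
    (hknn : ∀ x y, 0 ≤ k x y)
    (hkC : ∀ x, (∫⁻ y, ENNReal.ofReal (min 1 (‖x - y‖ ^ σ) * k x y)) ≤ ENNReal.ofReal C)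
    (hj : (∫⁻ z, ENNReal.ofReal (symLB k z)) = ⊤) :
    ∃ J : Euc N → ℝ≥0∞, Measurable J ∧ (∀ z, J z ≤ ENNReal.ofReal (symLB k z)) ∧
      ∀ r > (0:ℝ), 0 < volume {z : Euc N | z ∈ ball (0:Euc N) r ∧ 0 < J z} := by
  obtain ⟨J, hJmeas, hJle, hJeq⟩ :=
    exists_measurable_le_lintegral_eq (volume : Measure (Euc N))
      (fun z => ENNReal.ofReal (symLB k z))
  have hJint : (∫⁻ z, J z) = ⊤ := by rw [← hJeq]; exact hj
  refine ⟨J, hJmeas, hJle, ?_⟩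
  -- the bad set
  set Q : Set (Euc N × Euc N) :=
    {p | ENNReal.ofReal (k p.2 (p.2 + p.1)) < J p.1} with hQ
  have hkm2 : Measurable (fun p : Euc N × Euc N => k p.2 (p.2 + p.1)) :=
    hkmeas.comp (measurable_snd.prodMk (measurable_snd.add measurable_fst))
  have hQmeas : MeasurableSet Q :=
    measurableSet_lt hkm2.ennreal_ofReal (hJmeas.comp measurable_fst)
  have hQ0 : (volume.prod volume : Measure (Euc N × Euc N)) Q = 0 := by
    rw [Measure.measure_prod_null hQmeas]
    refine Filter.Eventually.of_forall fun z => ?_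
    have hle : ∀ᵐ x ∂(volume : Measure (Euc N)), J z ≤ ENNReal.ofReal (k x (x + z)) := by
      filter_upwards [symLB_le hknn z] with x hx
      exact (hJle z).trans (ENNReal.ofReal_le_ofReal hx)
    show volume (Prod.mk z ⁻¹' Q) = 0
    rw [ae_iff] at hle
    have heq : Prod.mk z ⁻¹' Q = {x : Euc N | ¬ J z ≤ ENNReal.ofReal (k x (x + z))} := by
      ext x; simp [hQ, not_le]
    rw [heq]
    exact hle
  have hR0 : (volume.prod volume : Measure (Euc N × Euc N)) (Prod.swap ⁻¹' Q) = 0 := by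
    rw [Measure.measurePreserving_swap.measure_preimage hQmeas.nullMeasurableSet]
    exact hQ0
  have hRmeas : MeasurableSet (Prod.swap ⁻¹' Q : Set (Euc N × Euc N)) :=
    hQmeas.preimage measurable_swap
  have hsec := (Measure.measure_prod_null hRmeas).1 hR0
  have hae : ∀ᵐ x ∂(volume : Measure (Euc N)),
      ∀ᵐ z ∂(volume : Measure (Euc N)), J z ≤ ENNReal.ofReal (k x (x + z)) := by
    filter_upwards [hsec] with x hx
    rw [ae_iff]
    have : {z : Euc N | ¬ J z ≤ ENNReal.ofReal (k x (x + z))} = Prod.mk x ⁻¹' (Prod.swap ⁻¹' Q) := by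
      ext z; simp [hQ, not_le]
    rw [this]
    exact hx
  obtain ⟨x₀, -, hx₀⟩ := exists_point (measure_ball_pos volume (0 : Euc N) one_pos) hae
  -- finiteness of the tail integral
  have tail : ∀ r > (0:ℝ), (∫⁻ z in (ball (0:Euc N) r)ᶜ, J z) < ⊤ := by
    intro r hr
    set m : ℝ := min 1 (r ^ σ) with hm
    have hmpos : 0 < m := lt_min one_pos (Real.rpow_pos_of_pos hr σ)
    have hb : ∀ᵐ z ∂(volume.restrict (ball (0:Euc N) r)ᶜ),
        J z ≤ (ENNReal.ofReal m)⁻¹ *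
          ENNReal.ofReal (min 1 (‖z‖ ^ σ) * k x₀ (x₀ + z)) := by
      filter_upwards [ae_restrict_of_ae hx₀,
        ae_restrict_mem measurableSet_ball.compl] with z hz hzball
      have hrz : r ≤ ‖z‖ := by
        have := hzball
        simp only [mem_compl_iff, mem_ball, dist_zero_right, not_lt] at this
        exact this
      have hmm : m ≤ min 1 (‖z‖ ^ σ) :=
        min_le_min le_rfl (Real.rpow_le_rpow hr.le hrz hσ0.le)
      have hknn' : (0:ℝ) ≤ k x₀ (x₀ + z) := hknn _ _
      calc J z ≤ ENNReal.ofReal (k x₀ (x₀ + z)) := hz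
        _ = (ENNReal.ofReal m)⁻¹ * (ENNReal.ofReal m * ENNReal.ofReal (k x₀ (x₀ + z))) := by
            rw [← mul_assoc, ENNReal.inv_mul_cancel (by simp [hmpos])
              ENNReal.ofReal_ne_top, one_mul]
        _ = (ENNReal.ofReal m)⁻¹ * ENNReal.ofReal (m * k x₀ (x₀ + z)) := by
            rw [ENNReal.ofReal_mul hmpos.le]
        _ ≤ (ENNReal.ofReal m)⁻¹ * ENNReal.ofReal (min 1 (‖z‖ ^ σ) * k x₀ (x₀ + z)) :=
            mul_le_mul_right (ENNReal.ofReal_le_ofReal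
              (mul_le_mul_of_nonneg_right hmm hknn')) _
    calc (∫⁻ z in (ball (0:Euc N) r)ᶜ, J z)
        ≤ ∫⁻ z in (ball (0:Euc N) r)ᶜ,
            (ENNReal.ofReal m)⁻¹ * ENNReal.ofReal (min 1 (‖z‖ ^ σ) * k x₀ (x₀ + z)) :=
          lintegral_mono_ae hb
      _ = (ENNReal.ofReal m)⁻¹ * ∫⁻ z in (ball (0:Euc N) r)ᶜ,
            ENNReal.ofReal (min 1 (‖z‖ ^ σ) * k x₀ (x₀ + z)) :=
          lintegral_const_mul' _ _ (by simp [hmpos])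
      _ ≤ (ENNReal.ofReal m)⁻¹ * ∫⁻ z, ENNReal.ofReal (min 1 (‖z‖ ^ σ) * k x₀ (x₀ + z)) := by
          gcongr
          exact Measure.restrict_le_self
      _ = (ENNReal.ofReal m)⁻¹ * ∫⁻ y, ENNReal.ofReal (min 1 (‖x₀ - y‖ ^ σ) * k x₀ y) := by
          congr 1
          rw [← lintegral_add_left_eq_self
            (fun y => ENNReal.ofReal (min 1 (‖x₀ - y‖ ^ σ) * k x₀ y)) x₀]
          apply lintegral_congr
          intro z
          have hzz : x₀ - (x₀ + z) = -z := by abel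
          simp only [hzz, norm_neg]
      _ ≤ (ENNReal.ofReal m)⁻¹ * ENNReal.ofReal C := by gcongr; exact hkC x₀
      _ < ⊤ := by
          apply ENNReal.mul_lt_top _ ENNReal.ofReal_lt_top
          simp [ENNReal.inv_lt_top, hmpos]
  -- positivity near 0
  intro r hr
  rw [pos_iff_ne_zero]
  intro h0
  have hball0 : (∫⁻ z in ball (0:Euc N) r, J z) = 0 := by
    have hz0 : ∀ᵐ z ∂(volume.restrict (ball (0:Euc N) r)), J z = 0 := by
      have hcompl : ∀ᵐ z ∂(volume : Measure (Euc N)), ¬ (z ∈ ball (0:Euc N) r ∧ 0 < J z) := by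
        rw [ae_iff]
        have heq : {z : Euc N | ¬¬(z ∈ ball (0:Euc N) r ∧ 0 < J z)} =
            {z : Euc N | z ∈ ball (0:Euc N) r ∧ 0 < J z} := by
          ext z; simp [not_not, pos_iff_ne_zero]
        rw [heq]
        exact h0
      filter_upwards [ae_restrict_of_ae hcompl, ae_restrict_mem measurableSet_ball]
        with z hz hzball
      by_contra hne
      exact hz ⟨hzball, pos_iff_ne_zero.2 hne⟩
    calc (∫⁻ z in ball (0:Euc N) r, J z) = ∫⁻ _ in ball (0:Euc N) r, 0 :=
        lintegral_congr_ae hz0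
      _ = 0 := lintegral_zero
  have htot := lintegral_add_compl (μ := (volume : Measure (Euc N))) J
    (measurableSet_ball : MeasurableSet (ball (0:Euc N) r))
  rw [hball0, zero_add, hJint] at htot
  exact absurd htot (tail r hr).ne

lemma local_const {k : Euc N → Euc N → ℝ} {Ω : Set (Euc N)} {u : Euc N → ℝ}
    (hΩo : IsOpen Ω) (hum : Measurable u)
    (hgood : ∀ᵐ z ∂(volume : Measure (Euc N)), 0 < symLB k z → z ∈ Good k Ω u)
    {J : Euc N → ℝ≥0∞} (hJmeas : Measurable J)
    (hJle : ∀ z, J z ≤ ENNReal.ofReal (symLB k z))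
    (hJpos : ∀ r > (0:ℝ), 0 < volume {z : Euc N | z ∈ ball (0:Euc N) r ∧ 0 < J z}) :
    ∀ p ∈ Ω, ∃ ε > (0:ℝ), ball p ε ⊆ Ω ∧
      ∃ c : ℝ, ∀ᵐ x ∂(volume : Measure (Euc N)), x ∈ ball p ε → u x = c := by
  intro p hp
  obtain ⟨r3, hr3, hball3⟩ := Metric.isOpen_iff.1 hΩo p hp
  set r : ℝ := r3 / 3 with hrdef
  have hr : 0 < r := by positivity
  have hball : ∀ x, dist x p < 3 * r → x ∈ Ω := by
    intro x hx
    apply hball3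
    rw [mem_ball]
    rw [hrdef] at hx
    linarith
  -- the positive measure set of good small vectors
  set A : Set (Euc N) := {z : Euc N | z ∈ ball (0:Euc N) r ∧ 0 < J z} with hAdef
  have hJposmeas : MeasurableSet {z : Euc N | 0 < J z} := by
    have h0 : {z : Euc N | 0 < J z} = (J ⁻¹' {0})ᶜ := by
      ext z; simp [pos_iff_ne_zero]
    rw [h0]
    exact (hJmeas (measurableSet_singleton 0)).compl
  have hAmeas : MeasurableSet A := measurableSet_ball.inter hJposmeas
  have hApos : 0 < volume A := hJpos r hr
  obtain ⟨Nm, hNsub, hNmeas, hN0⟩ :=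
    exists_measurable_superset_of_null (ae_iff.1 hgood)
  set A' : Set (Euc N) := A \ Nm with hA'def
  have hA'meas : MeasurableSet A' := hAmeas.diff hNmeas
  have hA'pos : 0 < volume A' := by
    rw [hA'def, measure_diff_null hN0]
    exact hApos
  have hA'G : ∀ z ∈ A', z ∈ Good k Ω u ∧ z ∈ ball (0:Euc N) r := by
    rintro z ⟨⟨hzball, hzJ⟩, hzN⟩
    have hzpos : 0 < symLB k z :=
      ENNReal.ofReal_pos.1 (lt_of_lt_of_le hzJ (hJle z))
    have : ¬ ¬ (0 < symLB k z → z ∈ Good k Ω u) := fun hcon => hzN (hNsub hcon)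
    exact ⟨(not_not.1 this) hzpos, hzball⟩
  -- Steinhaus
  have hnhds : A' - A' ∈ nhds (0 : Euc N) :=
    Measure.sub_mem_nhds_zero_of_addHaar_pos (volume : Measure (Euc N)) A' hA'meas hA'pos
  obtain ⟨δ, hδ, hδsub⟩ := Metric.mem_nhds_iff.1 hnhds
  -- each small vector acts trivially on ball p r
  have hstep : ∀ s ∈ ball (0:Euc N) δ,
      ∀ᵐ x ∂(volume : Measure (Euc N)), x ∈ ball p r → u (x + s) = u x := by
    intro s hs
    obtain ⟨a, ha, b, hb, hab⟩ := Set.mem_sub.1 (hδsub hs)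
    obtain ⟨haG, haball⟩ := hA'G a ha
    obtain ⟨hbG, hbball⟩ := hA'G b hb
    have hnb := good_neg hbG
    have h2 := ae_translate (P := fun w => w ∈ Ω → w + -b ∈ Ω → u (w + -b) = u w) a hnb
    filter_upwards [haG, h2] with x hx1 hx2 hxball
    have hdx : dist x p < r := mem_ball.1 hxball
    have hna : ‖a‖ < r := mem_ball_zero_iff.1 haball
    have hnbn : ‖b‖ < r := mem_ball_zero_iff.1 hbball
    have hdxa : dist (x + a) p < 2 * r := by
      have h4 : dist (x + a) p ≤ dist (x + a) x + dist x p := dist_triangle _ _ _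
      have h5 : dist (x + a) x = ‖a‖ := by
        rw [dist_eq_norm]
        congr 1
        abel
      linarith
    have hdxab : dist (x + a + -b) p < 3 * r := by
      have h4 : dist (x + a + -b) p ≤ dist (x + a + -b) (x + a) + dist (x + a) p :=
        dist_triangle _ _ _
      have h5 : dist (x + a + -b) (x + a) = ‖b‖ := by
        rw [dist_eq_norm]
        have : x + a + -b - (x + a) = -b := by abel
        rw [this, norm_neg]
      linarith
    have hxΩ : x ∈ Ω := hball x (by linarith)
    have hxaΩ : x + a ∈ Ω := hball _ (by linarith)
    have hxabΩ : x + a + -b ∈ Ω := hball _ hdxab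
    have e1 := hx1 hxΩ hxaΩ
    have e2 := hx2 hxaΩ hxabΩ
    have heq : x + a + -b = x + s := by rw [← hab]; abel
    rw [heq] at e2
    exact e2.trans e1
  -- Fubini swap
  set Bad2 : Set (Euc N × Euc N) :=
    {q | q.2 ∈ ball p r ∧ q.1 ∈ ball (0:Euc N) δ ∧ u (q.2 + q.1) ≠ u q.2} with hBad2def
  have hBad2meas : MeasurableSet Bad2 := by
    refine (measurableSet_ball.preimage measurable_snd).inter
      ((measurableSet_ball.preimage measurable_fst).inter ?_)
    exact (measurableSet_eq_fun (hum.comp (measurable_snd.add measurable_fst))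
      (hum.comp measurable_snd)).compl
  have hBad2null : (volume.prod volume : Measure (Euc N × Euc N)) Bad2 = 0 := by
    rw [Measure.measure_prod_null hBad2meas]
    refine Filter.Eventually.of_forall fun s => ?_
    show volume (Prod.mk s ⁻¹' Bad2) = 0
    by_cases hs : s ∈ ball (0:Euc N) δ
    · refine measure_mono_null (fun x hx => ?_) (ae_iff.1 (hstep s hs))
      obtain ⟨hx1, -, hx3⟩ := hx
      exact fun himp => hx3 (himp hx1)
    · have : Prod.mk s ⁻¹' Bad2 = ∅ := by
        ext x
        simp only [mem_preimage, hBad2def, mem_setOf_eq, mem_empty_iff_false, iff_false]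
        rintro ⟨-, h2, -⟩
        exact hs h2
      simp [this]
  have hBad3null : (volume.prod volume : Measure (Euc N × Euc N)) (Prod.swap ⁻¹' Bad2) = 0 := by
    rw [Measure.measurePreserving_swap.measure_preimage hBad2meas.nullMeasurableSet]
    exact hBad2null
  have hBad3meas : MeasurableSet (Prod.swap ⁻¹' Bad2 : Set (Euc N × Euc N)) :=
    hBad2meas.preimage measurable_swap
  have hxsec := (Measure.measure_prod_null hBad3meas).1 hBad3null
  -- choose a good center
  set ε : ℝ := min (δ / 2) r with hεdef
  have hε : 0 < ε := lt_min (by positivity) hr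
  obtain ⟨x₀, hx₀ball, hx₀⟩ := exists_point (measure_ball_pos volume p hε) hxsec
  have hx₀null : volume {s : Euc N | x₀ ∈ ball p r ∧ s ∈ ball (0:Euc N) δ ∧ u (x₀ + s) ≠ u x₀} = 0 := hx₀
  refine ⟨ε, hε, fun x hx => hball x ?_, u x₀, ?_⟩
  · have : dist x p < ε := mem_ball.1 hx
    have : dist x p < r := lt_of_lt_of_le this (min_le_right _ _)
    linarith
  · rw [ae_iff]
    have hsub : {x : Euc N | ¬ (x ∈ ball p ε → u x = u x₀)} ⊆
        (fun x => x + -x₀) ⁻¹' {s : Euc N | x₀ ∈ ball p r ∧ s ∈ ball (0:Euc N) δ ∧ u (x₀ + s) ≠ u x₀} := by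
      intro x hx
      rw [mem_setOf_eq, Classical.not_imp] at hx
      obtain ⟨hxball, hxne⟩ := hx
      have hx₀r : x₀ ∈ ball p r :=
        mem_ball.2 (lt_of_lt_of_le (mem_ball.1 hx₀ball) (min_le_right _ _))
      have hsball : x + -x₀ ∈ ball (0:Euc N) δ := by
        rw [mem_ball_zero_iff]
        have h1 : ‖x + -x₀‖ = dist x x₀ := by rw [dist_eq_norm, sub_eq_add_neg]
        have h2 : dist x x₀ ≤ dist x p + dist p x₀ := dist_triangle _ _ _
        have h3 : dist x p < ε := mem_ball.1 hxball
        have h4 : dist p x₀ < ε := by rw [dist_comm]; exact mem_ball.1 hx₀ball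
        have h5 : ε ≤ δ / 2 := min_le_left _ _
        rw [h1]
        linarith
      refine ⟨hx₀r, hsball, ?_⟩
      have : x₀ + (x + -x₀) = x := by abel
      rw [this]
      exact hxne
    refine measure_mono_null hsub ?_
    rw [measure_preimage_add_right]
    exact hx₀null

lemma global_const {Ω : Set (Euc N)} {u : Euc N → ℝ} (hΩo : IsOpen Ω)
    (hΩconn : IsConnected Ω)
    (loc : ∀ p ∈ Ω, ∃ ε > (0:ℝ), ball p ε ⊆ Ω ∧
      ∃ c : ℝ, ∀ᵐ x ∂(volume : Measure (Euc N)), x ∈ ball p ε → u x = c) :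
    ∃ c : ℝ, ∀ᵐ x ∂(volume.restrict Ω), u x = c := by
  obtain ⟨p₀, hp₀⟩ := hΩconn.nonempty
  obtain ⟨ε₀, hε₀, hb₀, c, hc⟩ := loc p₀ hp₀
  set U : Set (Euc N) := {p | p ∈ Ω ∧ ∃ ε > (0:ℝ), ball p ε ⊆ Ω ∧
      ∀ᵐ x ∂(volume : Measure (Euc N)), x ∈ ball p ε → u x = c} with hU
  have hp₀U : p₀ ∈ U := ⟨hp₀, ε₀, hε₀, hb₀, hc⟩
  have hUopen : IsOpen U := by
    rw [Metric.isOpen_iff]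
    rintro q ⟨hqΩ, ε, hε, hb, hae⟩
    refine ⟨ε / 2, by positivity, ?_⟩
    intro q' hq'
    have hd : dist q' q < ε / 2 := mem_ball.1 hq'
    have hsub : ball q' (ε / 2) ⊆ ball q ε := ball_subset_ball' (by linarith)
    refine ⟨hb (hsub (mem_ball_self (by positivity))), ε / 2, by positivity,
      hsub.trans hb, ?_⟩
    filter_upwards [hae] with x hx hxball
    exact hx (hsub hxball)
  have hVopen : IsOpen (Ω \ U) := by
    rw [Metric.isOpen_iff]
    rintro q ⟨hqΩ, hqU⟩
    obtain ⟨ε, hε, hb, d, hd⟩ := loc q hqΩ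
    refine ⟨ε / 2, by positivity, ?_⟩
    intro q' hq'
    have hdq : dist q' q < ε / 2 := mem_ball.1 hq'
    have hq'Ω : q' ∈ Ω := hb (mem_ball.2 (by linarith))
    refine ⟨hq'Ω, fun hq'U => hqU ?_⟩
    obtain ⟨-, ε', hε', hb', hae'⟩ := hq'U
    have hWpos : 0 < volume (ball q' (min ε' (ε / 2))) :=
      measure_ball_pos _ _ (lt_min hε' (by positivity))
    have hWsub1 : ball q' (min ε' (ε / 2)) ⊆ ball q' ε' := ball_subset_ball (min_le_left _ _)
    have hWsub2 : ball q' (min ε' (ε / 2)) ⊆ ball q ε :=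
      subset_trans (ball_subset_ball (min_le_right _ _)) (ball_subset_ball' (by linarith))
    obtain ⟨x, hxW, hx1, hx2⟩ := exists_point hWpos (hd.and hae')
    have hcd : d = c := (hx1 (hWsub2 hxW)).symm.trans (hx2 (hWsub1 hxW))
    refine ⟨hqΩ, ε, hε, hb, ?_⟩
    filter_upwards [hd] with x hx hxb
    rw [hx hxb, hcd]
  have hcover : Ω ⊆ U ∪ (Ω \ U) := fun x hx =>
    (em (x ∈ U)).elim Or.inl fun h => Or.inr ⟨hx, h⟩
  have hΩU : Ω ⊆ U := by
    intro q hqΩ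
    by_contra hqU
    obtain ⟨x, hx⟩ := hΩconn.isPreconnected U (Ω \ U) hUopen hVopen hcover
      ⟨p₀, hp₀, hp₀U⟩ ⟨q, hqΩ, hqΩ, hqU⟩
    exact hx.2.2.2 hx.2.1
  have hnull : volume {x : Euc N | x ∈ Ω ∧ u x ≠ c} = 0 := by
    apply measure_null_of_locally_null
    intro x hx
    obtain ⟨hxΩ, ε, hε, hb, hae⟩ := hΩU hx.1
    refine ⟨{y : Euc N | y ∈ Ω ∧ u y ≠ c} ∩ ball x ε,
      inter_mem_nhdsWithin _ (ball_mem_nhds x hε), ?_⟩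
    refine measure_mono_null (fun y hy => ?_) (ae_iff.1 hae)
    exact fun himp => hy.1.2 (himp hy.2)
  refine ⟨c, ?_⟩
  rw [ae_restrict_iff' hΩo.measurableSet, ae_iff]
  have heq : {x : Euc N | ¬ (x ∈ Ω → u x = c)} = {x : Euc N | x ∈ Ω ∧ u x ≠ c} := by
    ext x; simp [Classical.not_imp]
  rw [heq]
  exact hnull


end ZEC

/-- functions with vanishing energy are constant. -/
theorem zero_energy_constant
    {N : ℕ} (hN : 0 < N) {σ : ℝ} (hσ0 : 0 < σ) (hσ2 : σ ≤ 2)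
    (k : Euc N → Euc N → ℝ) (hk : IsKernel N σ k)
    (hj : (∫⁻ z, ENNReal.ofReal (symLB k z)) = ⊤)
    (Ω : Set (Euc N)) (hΩo : IsOpen Ω) (hΩb : Bornology.IsBounded Ω) (hΩconn : IsConnected Ω)
    (u : Euc N → ℝ) (hum : Measurable u) (huL2 : MemLp u 2 (volume.restrict Ω))
    (hq : quadForm k Ω u = 0) :
    ∃ c : ℝ, ∀ᵐ x ∂(volume.restrict Ω), u x = c := by
  obtain ⟨hkmeas, hknn, hksym, C, hkC⟩ := hk
  have hq' : (∫⁻ x in Ω, ∫⁻ y in Ω, ENNReal.ofReal ((u x - u y) ^ 2 * k x y)) = 0 := by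
    rw [quadForm] at hq
    rcases mul_eq_zero.1 hq with h | h
    · exact absurd h (by simp)
    · exact h
  have hkey := ZEC.key_pairs hkmeas hknn hum hq'
  have hgood := ZEC.ae_good hΩo hkmeas hknn hum hkey
  obtain ⟨J, hJmeas, hJle, hJpos⟩ := ZEC.exists_J hσ0 hkmeas hknn hkC hj
  exact ZEC.global_const hΩo hΩconn (ZEC.local_const hΩo hum hgood hJmeas hJle hJpos)
end
end

section
/- Let σ ∈ (0,1) and let k be a kernel of order σ. Let Ω ⊂ ℝ^N be a bounded open set with Lipschitz boundary. Then the indicator function 1_Ω belongs to D^k(ℝ^N); that is, b_k(1_Ω) = ∫_Ω ∫_{ℝ^N∖Ω} k(x,y) dy dx < ∞. -/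
open MeasureTheory ENNReal Metric Set Filter

noncomputable section

set_option maxHeartbeats 1000000

lemma coord_le_dist {n : ℕ} (z w : Euc n) (i : Fin n) : |z i - w i| ≤ dist z w := by
  rw [← Real.dist_eq, EuclideanSpace.dist_eq]
  have h1 : dist (z i) (w i) ^ 2 ≤ ∑ j, dist (z j) (w j) ^ 2 :=
    Finset.single_le_sum (f := fun j => dist (z j) (w j) ^ 2) (fun j _ => sq_nonneg _)
      (Finset.mem_univ i)
  calc dist (z i) (w i) = Real.sqrt (dist (z i) (w i) ^ 2) := (Real.sqrt_sq dist_nonneg).symm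
  _ ≤ _ := Real.sqrt_le_sqrt h1

lemma le_infDist' {α : Type*} [MetricSpace α] {s : Set α} (h : s.Nonempty) (x : α) (b : ℝ)
    (H : ∀ y ∈ s, b ≤ dist x y) : b ≤ infDist x s := by
  by_contra hlt
  push_neg at hlt
  obtain ⟨y, hy, hd⟩ := (Metric.infDist_lt_iff h).1 hlt
  exact absurd (H y hy) (by linarith)

lemma isoMP {n : ℕ} (e : Euc n ≃ᵢ Euc n) : MeasurePreserving (⇑e) volume volume := by
  have h1 : MeasurePreserving (⇑e.toRealLinearIsometryEquiv) volume volume :=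
    e.toRealLinearIsometryEquiv.measurePreserving
  have h2 : MeasurePreserving (fun z : Euc n => z + e 0) volume volume :=
    measurePreserving_add_right volume (e 0)
  have he : (⇑e) = (fun z => z + e 0) ∘ (⇑e.toRealLinearIsometryEquiv) := by
    funext x
    simp [IsometryEquiv.toRealLinearIsometryEquiv_apply]
  rw [he]
  exact h2.comp h1

lemma I0_lt_top {σ D : ℝ} (hσ1 : σ < 1) :
    ∫⁻ u, Set.indicator (Set.Ioo (0:ℝ) D) (fun u => ENNReal.ofReal (u ^ (-σ))) u < ⊤ := by
  rw [lintegral_indicator measurableSet_Ioo]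
  rcases le_or_gt D 0 with hD | hD
  · rw [Set.Ioo_eq_empty (by linarith)]; simp
  · have hii : IntervalIntegrable (fun u : ℝ => u ^ (-σ)) volume 0 D :=
      intervalIntegral.intervalIntegrable_rpow' (by linarith)
    have hInt : IntegrableOn (fun u : ℝ => u ^ (-σ)) (Set.Ioo 0 D) volume :=
      ((intervalIntegrable_iff_integrableOn_Ioc_of_le hD.le).1 hii).mono_set Set.Ioo_subset_Ioc_self
    exact hInt.lintegral_lt_top

lemma measurable_F {σ D : ℝ} :
    Measurable (Set.indicator (Set.Ioo (0:ℝ) D) (fun u => ENNReal.ofReal (u ^ (-σ)))) := by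
  refine Measurable.indicator ?_ measurableSet_Ioo
  exact (by measurability : Measurable fun u : ℝ => u ^ (-σ)).ennreal_ofReal

lemma slab_lt_top (n : ℕ) {σ r D : ℝ} (hσ1 : σ < 1)
    (g : (Fin (n+1) → ℝ) → ℝ) (hg : Measurable g)
    (hdep : ∀ v w : Fin (n+1) → ℝ,
      (∀ j : Fin n, v ((Fin.last n).succAbove j) = w ((Fin.last n).succAbove j)) → g v = g w)
    (q : Fin (n+1) → ℝ) :
    ∫⁻ w, Set.indicator {w : Fin (n+1) → ℝ | ∀ i, |w i - q i| ≤ r} (fun _ => (1:ℝ≥0∞)) w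
      * Set.indicator (Set.Ioo (0:ℝ) D) (fun u => ENNReal.ofReal (u ^ (-σ)))
          (w (Fin.last n) - g w) < ⊤ := by
  set F := Set.indicator (Set.Ioo (0:ℝ) D) (fun u => ENNReal.ofReal (u ^ (-σ))) with hF
  set i₀ := Fin.last n
  set ψ := MeasurableEquiv.piFinSuccAbove (fun _ : Fin (n+1) => ℝ) i₀ with hψ
  have hmp : MeasurePreserving ψ.symm volume volume :=
    (volume_preserving_piFinSuccAbove (fun _ : Fin (n+1) => ℝ) i₀).symm
  set B : Set (Fin (n+1) → ℝ) := {w | ∀ i, |w i - q i| ≤ r} with hB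
  have hBm : MeasurableSet B := by
    have : B = ⋂ i, {w : Fin (n+1) → ℝ | |w i - q i| ≤ r} := by
      ext w; simp [hB, Set.mem_iInter]
    rw [this]
    exact MeasurableSet.iInter fun i =>
      measurableSet_le (((measurable_pi_apply i).sub measurable_const).abs) measurable_const
  set G : (Fin (n+1) → ℝ) → ℝ≥0∞ := fun w =>
    Set.indicator B (fun _ => (1:ℝ≥0∞)) w * F (w i₀ - g w) with hG
  have hGm : Measurable G := by
    apply Measurable.mul
    · exact (measurable_const.indicator hBm)
    · exact measurable_F.comp ((measurable_pi_apply i₀).sub hg)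
  have key : ∫⁻ w, G w = ∫⁻ p : ℝ × (Fin n → ℝ), G (ψ.symm p) := (hmp.lintegral_comp hGm).symm
  rw [key]
  -- now bound by product form
  set B' : Set (Fin n → ℝ) := {v | ∀ j, |v j - q (i₀.succAbove j)| ≤ r} with hB'
  have hB'm : MeasurableSet B' := by
    have : B' = ⋂ j, {v : Fin n → ℝ | |v j - q (i₀.succAbove j)| ≤ r} := by
      ext v; simp [hB', Set.mem_iInter]
    rw [this]
    exact MeasurableSet.iInter fun j =>
      measurableSet_le (((measurable_pi_apply j).sub measurable_const).abs) measurable_const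
  set g' : (Fin n → ℝ) → ℝ := fun v => g (i₀.insertNth 0 v) with hg'
  have hg'm : Measurable g' := by
    have h1 : Measurable fun v : Fin n → ℝ => ψ.symm ((0:ℝ), v) :=
      ψ.symm.measurable.comp (measurable_const.prodMk measurable_id)
    exact hg.comp h1
  have hsymm : ∀ p : ℝ × (Fin n → ℝ), ψ.symm p = i₀.insertNth p.1 p.2 := fun p => rfl
  have hgsymm : ∀ (a : ℝ) (v : Fin n → ℝ), g (i₀.insertNth a v) = g' v := by
    intro a v
    exact hdep _ _ (fun j => by simp [Fin.insertNth_apply_succAbove])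
  set H : ℝ × (Fin n → ℝ) → ℝ≥0∞ := fun p =>
    Set.indicator B' (fun _ => (1:ℝ≥0∞)) p.2 * F (p.1 - g' p.2) with hH
  have hHm : Measurable H := by
    apply Measurable.mul
    · exact (measurable_const.indicator hB'm).comp measurable_snd
    · exact measurable_F.comp (measurable_fst.sub (hg'm.comp measurable_snd))
  have hle : ∀ p : ℝ × (Fin n → ℝ), G (ψ.symm p) ≤ H p := by
    rintro ⟨a, v⟩
    rw [hsymm]
    simp only [hG, hH]
    gcongr
    · by_cases h : (i₀.insertNth a v) ∈ B
      · have h2 : v ∈ B' := by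
          intro j
          have := h (i₀.succAbove j)
          rwa [Fin.insertNth_apply_succAbove] at this
        rw [Set.indicator_of_mem h, Set.indicator_of_mem h2]
      · rw [Set.indicator_of_notMem h]; exact zero_le
    · rw [Fin.insertNth_apply_same, hgsymm]
  calc ∫⁻ p : ℝ × (Fin n → ℝ), G (ψ.symm p) ≤ ∫⁻ p, H p := lintegral_mono hle
  _ = ∫⁻ v, ∫⁻ a, H (a, v) := by
      rw [Measure.volume_eq_prod]
      exact lintegral_prod_symm H hHm.aemeasurable
  _ = ∫⁻ v, Set.indicator B' (fun _ => (1:ℝ≥0∞)) v * ∫⁻ u, F u := by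
      congr 1
      ext v
      rw [hH]
      simp only
      rw [lintegral_const_mul' _ _ (by
        by_cases h : v ∈ B'
        · simp [Set.indicator_of_mem h]
        · simp [Set.indicator_of_notMem h])]
      congr 1
      have : ∀ a : ℝ, F (a - g' v) = F (a + (-(g' v))) := fun a => by rw [sub_eq_add_neg]
      simp_rw [this]
      exact lintegral_add_right_eq_self F (-(g' v))
  _ = ∫⁻ _ in B', (∫⁻ u, F u) := by
      rw [← lintegral_indicator hB'm]
      congr 1
      ext v
      by_cases h : v ∈ B'
      · simp [Set.indicator_of_mem h]
      · simp [Set.indicator_of_notMem h]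
  _ = (∫⁻ u, F u) * volume B' := setLIntegral_const _ _
  _ < ⊤ := by
      apply ENNReal.mul_lt_top (I0_lt_top hσ1)
      have : B' = Set.pi Set.univ (fun j => Metric.closedBall (q (i₀.succAbove j)) r) := by
        ext v
        simp [hB', Set.mem_pi, Real.dist_eq, Metric.mem_closedBall]
      rw [this, volume_pi_pi]
      exact ENNReal.prod_lt_top (fun j _ => by rw [Real.volume_closedBall]; exact ofReal_lt_top)

lemma minpow_bound {σ r c t d : ℝ} (hσ0 : 0 < σ) (hr : 0 < r) (hc : 0 < c) (ht : 0 < t)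
    (hgeom : min r (t / c) ≤ d) :
    ENNReal.ofReal ((min d 1) ^ (-σ)) ≤
      ENNReal.ofReal ((min r 1) ^ (-σ)) + ENNReal.ofReal (c ^ σ * t ^ (-σ)) := by
  have htc : 0 < t / c := div_pos ht hc
  have hmono : (min d 1) ^ (-σ) ≤ (min (min r (t/c)) 1) ^ (-σ) :=
    Real.rpow_le_rpow_of_nonpos (lt_min (lt_min hr htc) one_pos)
      (min_le_min hgeom le_rfl) (by linarith)
  refine (ENNReal.ofReal_le_ofReal hmono).trans ?_
  rcases le_total r (t/c) with h | h
  · rw [min_eq_left h]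
    exact le_self_add
  · rw [min_eq_right h]
    rcases le_total (t/c) 1 with h1 | h1
    · rw [min_eq_left h1]
      have heq : (t/c) ^ (-σ) = c ^ σ * t ^ (-σ) := by
        rw [Real.div_rpow ht.le hc.le, Real.rpow_neg hc.le, div_eq_mul_inv, inv_inv, mul_comm]
      rw [heq]
      exact le_add_self
    · rw [min_eq_right h1]
      have h2 : (1:ℝ) ^ (-σ) ≤ (min r 1) ^ (-σ) :=
        Real.rpow_le_rpow_of_nonpos (lt_min hr one_pos) (min_le_right r 1) (by linarith)
      exact ((ENNReal.ofReal_le_ofReal h2).trans le_self_add)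


lemma chart_lt_top (n : ℕ) {σ : ℝ} (hσ0 : 0 < σ) (hσ1 : σ < 1)
    (Ω : Set (Euc (n+1))) (hΩo : IsOpen Ω) (hΩl : HasLipschitzBoundary (n+1) Ω)
    (p : Euc (n+1)) (hp : p ∈ frontier Ω) :
    ∃ r > (0:ℝ), ∫⁻ x in Ω ∩ ball p r,
      ENNReal.ofReal ((min (infDist x Ωᶜ) 1) ^ (-σ)) < ⊤ := by
  obtain ⟨U, hU, e, γ, L, hγL, hdep, hchart⟩ := hΩl p hp
  obtain ⟨ε, hε, hballU⟩ := Metric.mem_nhds_iff.1 hU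
  set r := ε/3 with hrdef
  have hr0 : (0:ℝ) < r := by positivity
  have h3r : ball p (3*r) ⊆ U := by
    have : 3*r = ε := by rw [hrdef]; ring
    rw [this]; exact hballU
  refine ⟨r, hr0, ?_⟩
  set i₀ := Fin.last n with hi₀
  set t : Euc (n+1) → ℝ := fun x => e x i₀ - γ (e x) with ht
  have hpU : p ∈ U := mem_of_mem_nhds hU
  have hpΩ : p ∉ Ω := by
    rw [hΩo.frontier_eq] at hp; exact hp.2
  have hL1 : (0:ℝ) < 1 + L := by positivity
  set D := (1 + (L:ℝ)) * r with hD
  have hD0 : 0 < D := by positivity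
  -- membership characterization
  have hmem : ∀ y ∈ U, (y ∈ Ω ↔ γ (e y) < e y i₀) := by
    intro y hyU
    constructor
    · intro hyΩ
      have h1 : y ∈ Ω ∩ U := ⟨hyΩ, hyU⟩
      rw [hchart] at h1
      exact h1.2 i₀ (by simp [hi₀, Fin.val_last])
    · intro hlt
      have h1 : y ∈ {x ∈ U | ∀ i : Fin (n+1), (i : ℕ) + 1 = n+1 → γ (e x) < e x i} := by
        refine ⟨hyU, fun i hi => ?_⟩
        have hii : i = i₀ := Fin.ext (by simp [hi₀, Fin.val_last]; omega)
        rwa [hii]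
      rw [← hchart] at h1
      exact h1.1
  -- Lipschitz-type increment bound
  have htdiff : ∀ x y : Euc (n+1), t x - t y ≤ (1 + L) * dist x y := by
    intro x y
    have h1 : e x i₀ - e y i₀ ≤ dist x y := by
      have := coord_le_dist (e x) (e y) i₀
      rw [e.dist_eq] at this
      exact (le_abs_self _).trans this
    have h2 : γ (e y) - γ (e x) ≤ L * dist x y := by
      have h3 := hγL.dist_le_mul (e y) (e x)
      rw [Real.dist_eq, e.dist_eq, dist_comm] at h3
      exact (le_abs_self _).trans h3
    calc t x - t y = (e x i₀ - e y i₀) + (γ (e y) - γ (e x)) := by rw [ht]; ring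
    _ ≤ dist x y + L * dist x y := add_le_add h1 h2
    _ = (1 + L) * dist x y := by ring
  have htpos : ∀ x ∈ Ω ∩ ball p r, 0 < t x := by
    intro x hx
    have hxU : x ∈ U := h3r (ball_subset_ball (by linarith) hx.2)
    have h1 := (hmem x hxU).1 hx.1
    rw [ht]; simp only; linarith
  have htD : ∀ x ∈ ball p r, t x < D := by
    intro x hx
    have hp0 : t p ≤ 0 := by
      have h2 : ¬ (γ (e p) < e p i₀) := fun hcon => hpΩ ((hmem p hpU).2 hcon)
      rw [ht]; simp only; linarith [not_lt.1 h2]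
    have h3 := htdiff x p
    have hd : dist x p < r := mem_ball.1 hx
    have h4 : (1 + (L:ℝ)) * dist x p < (1 + (L:ℝ)) * r :=
      mul_lt_mul_of_pos_left hd hL1
    rw [hD]; linarith
  have hgeom : ∀ x ∈ Ω ∩ ball p r, min r (t x / (1 + L)) ≤ infDist x Ωᶜ := by
    intro x hx
    have hΩc : (Ωᶜ : Set (Euc (n+1))).Nonempty := ⟨p, hpΩ⟩
    refine le_infDist' hΩc x _ (fun y hy => ?_)
    by_cases hyU : y ∈ U
    · have hyΩ : y ∉ Ω := hy
      have hyγ : e y i₀ ≤ γ (e y) := not_lt.1 (fun hcon => hyΩ ((hmem y hyU).2 hcon))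
      refine min_le_of_right_le ?_
      have hty : t y ≤ 0 := by rw [ht]; simp only; linarith
      have h1 := htdiff x y
      rw [div_le_iff₀ hL1, mul_comm]
      linarith
    · refine min_le_of_left_le ?_
      have h1 : 3*r ≤ dist y p := by
        by_contra hcon; push_neg at hcon
        exact hyU (h3r (mem_ball.2 hcon))
      have h2 : dist x p < r := mem_ball.1 hx.2
      have h3 : dist y p ≤ dist y x + dist x p := dist_triangle y x p
      have h4 : dist y x = dist x y := dist_comm y x
      linarith
  set S := Ω ∩ ball p r with hS
  have hSm : MeasurableSet S := (hΩo.inter isOpen_ball).measurableSet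
  have hem : Measurable (⇑e) := e.continuous.measurable
  have htm : Measurable t := by
    have h1 : Measurable fun x : Euc (n+1) => e x i₀ :=
      (EuclideanSpace.proj i₀).continuous.measurable.comp hem
    exact h1.sub (hγL.continuous.measurable.comp hem)
  have hrpow : Measurable fun u : ℝ => u ^ (-σ) := by measurability
  -- the J integral
  set ι := ((MeasurableEquiv.toLp 2 (Fin (n+1) → ℝ)).symm).symm with hι
  set q : Fin (n+1) → ℝ := fun i => e p i with hq
  set g : (Fin (n+1) → ℝ) → ℝ := fun w => γ (ι w) with hg
  have hgm : Measurable g := hγL.continuous.measurable.comp (MeasurableEquiv.measurable _)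
  have hgdep : ∀ v w : Fin (n+1) → ℝ,
      (∀ j : Fin n, v ((Fin.last n).succAbove j) = w ((Fin.last n).succAbove j)) → g v = g w := by
    intro v w h
    refine hdep _ _ (fun i hi => ?_)
    have hine : i ≠ Fin.last n := by
      intro hcon; rw [hcon] at hi; simp [Fin.val_last] at hi
    obtain ⟨j, hj⟩ := Fin.exists_succAbove_eq hine
    have h1 : (ι v) i = v i := rfl
    have h2 : (ι w) i = w i := rfl
    rw [h1, h2, ← hj]
    exact h j
  set W : (Fin (n+1) → ℝ) → ℝ≥0∞ := fun w =>
    Set.indicator {w : Fin (n+1) → ℝ | ∀ i, |w i - q i| ≤ r} (fun _ => (1:ℝ≥0∞)) w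
      * Set.indicator (Set.Ioo (0:ℝ) D) (fun u => ENNReal.ofReal (u ^ (-σ)))
          (w (Fin.last n) - g w) with hW
  have hWslab : ∫⁻ w, W w < ⊤ := slab_lt_top n hσ1 g hgm hgdep q
  have hWm : Measurable W := by
    apply Measurable.mul
    · refine measurable_const.indicator ?_
      have hBeq : {w : Fin (n+1) → ℝ | ∀ i, |w i - q i| ≤ r}
          = ⋂ i, {w : Fin (n+1) → ℝ | |w i - q i| ≤ r} := by
        ext w; simp [Set.mem_iInter]
      rw [hBeq]
      exact MeasurableSet.iInter fun i =>
        measurableSet_le (((measurable_pi_apply i).sub measurable_const).abs) measurable_const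
    · exact measurable_F.comp ((measurable_pi_apply (Fin.last n)).sub hgm)
  set V : Euc (n+1) → ℝ≥0∞ := fun z => W ((MeasurableEquiv.toLp 2 (Fin (n+1) → ℝ)).symm z) with hV
  have hVm : Measurable V := hWm.comp (MeasurableEquiv.measurable _)
  have hVint : ∫⁻ z, V z < ⊤ := by
    rw [hV]
    rw [(EuclideanSpace.volume_preserving_symm_measurableEquiv_toLp (Fin (n+1))).lintegral_comp hWm]
    exact hWslab
  have hJ : ∫⁻ x in S, ENNReal.ofReal ((t x) ^ (-σ)) < ⊤ := by
    have hle : ∀ x : Euc (n+1),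
        S.indicator (fun x => ENNReal.ofReal ((t x) ^ (-σ))) x ≤ V (e x) := by
      intro x
      by_cases hx : x ∈ S
      · rw [Set.indicator_of_mem hx, hV, hW]
        simp only
        have hmem1 : (fun i => e x i) ∈ {w : Fin (n+1) → ℝ | ∀ i, |w i - q i| ≤ r} := by
          intro i
          have h1 := coord_le_dist (e x) (e p) i
          rw [e.dist_eq] at h1
          exact h1.trans (mem_ball.1 hx.2).le
        have hid : ((MeasurableEquiv.toLp 2 (Fin (n+1) → ℝ)).symm (e x)) = fun i => e x i := rfl
        have hgval : g ((MeasurableEquiv.toLp 2 (Fin (n+1) → ℝ)).symm (e x)) = γ (e x) := by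
          rw [hg]
          simp only [hι, MeasurableEquiv.symm_apply_apply]
        rw [Set.indicator_of_mem (by exact hmem1), hgval]
        have harg : ((MeasurableEquiv.toLp 2 (Fin (n+1) → ℝ)).symm (e x)) (Fin.last n) = e x i₀ := rfl
        rw [harg]
        have htIoo : e x i₀ - γ (e x) ∈ Set.Ioo (0:ℝ) D :=
          ⟨htpos x hx, htD x hx.2⟩
        rw [Set.indicator_of_mem htIoo]
        simp [ht]
      · rw [Set.indicator_of_notMem hx]
        exact zero_le
    calc ∫⁻ x in S, ENNReal.ofReal ((t x) ^ (-σ))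
        = ∫⁻ x, S.indicator (fun x => ENNReal.ofReal ((t x) ^ (-σ))) x :=
          (lintegral_indicator hSm _).symm
    _ ≤ ∫⁻ x, V (e x) := lintegral_mono hle
    _ = ∫⁻ z, V z := (isoMP e).lintegral_comp hVm
    _ < ⊤ := hVint
  -- assemble
  have hstep1 : ∫⁻ x in S, ENNReal.ofReal ((min (infDist x Ωᶜ) 1) ^ (-σ))
      ≤ ∫⁻ x in S, (ENNReal.ofReal ((min r 1) ^ (-σ))
          + ENNReal.ofReal ((1 + (L:ℝ)) ^ σ) * ENNReal.ofReal ((t x) ^ (-σ))) := by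
    refine setLIntegral_mono ?_ ?_
    · exact measurable_const.add
        (measurable_const.mul ((hrpow.comp htm).ennreal_ofReal))
    · intro x hx
      have h1 := minpow_bound hσ0 hr0 hL1 (htpos x hx) (hgeom x hx)
      refine h1.trans ?_
      rw [← ENNReal.ofReal_mul (Real.rpow_nonneg hL1.le σ)]
  have hfin : ∫⁻ x in S, (ENNReal.ofReal ((min r 1) ^ (-σ))
      + ENNReal.ofReal ((1 + (L:ℝ)) ^ σ) * ENNReal.ofReal ((t x) ^ (-σ))) < ⊤ := by
    rw [lintegral_add_left measurable_const]
    rw [setLIntegral_const]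
    rw [lintegral_const_mul' _ _ ofReal_ne_top]
    apply ENNReal.add_lt_top.2
    constructor
    · exact ENNReal.mul_lt_top ofReal_lt_top
        (lt_of_le_of_lt (measure_mono Set.inter_subset_right) measure_ball_lt_top)
    · exact ENNReal.mul_lt_top ofReal_lt_top hJ
  exact lt_of_le_of_lt hstep1 hfin

lemma crux_lt_top (n : ℕ) {σ : ℝ} (hσ0 : 0 < σ) (hσ1 : σ < 1)
    (Ω : Set (Euc (n+1))) (hΩo : IsOpen Ω) (hΩb : Bornology.IsBounded Ω)
    (hΩl : HasLipschitzBoundary (n+1) Ω) :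
    ∫⁻ x in Ω, ENNReal.ofReal ((min (infDist x Ωᶜ) 1) ^ (-σ)) < ⊤ := by
  rcases Set.eq_empty_or_nonempty (Ωᶜ : Set (Euc (n+1))) with hne | hne
  · have h0 : ∀ x : Euc (n+1), (min (infDist x Ωᶜ) 1) ^ (-σ) = 0 := by
      intro x
      rw [hne]
      simp [Metric.infDist_empty, Real.zero_rpow (by intro h; simp at h; linarith : -σ ≠ 0)]
    simp only [h0]
    simp
  · have hfb : Bornology.IsBounded (frontier Ω) := hΩb.closure.subset frontier_subset_closure
    have hfc : IsCompact (frontier Ω) :=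
      Metric.isCompact_of_isClosed_isBounded isClosed_frontier hfb
    choose! r hr0 hrint using fun p (hp : p ∈ frontier Ω) => chart_lt_top n hσ0 hσ1 Ω hΩo hΩl p hp
    obtain ⟨t, htsub, htcov⟩ := hfc.elim_nhds_subcover (fun p => ball p (r p))
      (fun p hp => ball_mem_nhds p (hr0 p hp))
    set K := ⋃ p ∈ t, ball p (r p) with hK
    have hKopen : IsOpen K := isOpen_biUnion fun p _ => isOpen_ball
    have hTsub : closure Ω \ K ⊆ Ω := by
      intro x hx
      rcases (closure_eq_self_union_frontier Ω ▸ hx.1) with h | h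
      · exact h
      · exact absurd (htcov h) hx.2
    have hTcomp : IsCompact (closure Ω \ K) := hΩb.isCompact_closure.diff hKopen
    obtain ⟨δ, hδ0, hδsub⟩ := hTcomp.exists_thickening_subset_open hΩo hTsub
    have hδbound : ∀ x ∈ Ω \ K, δ ≤ infDist x Ωᶜ := by
      intro x hx
      refine le_infDist' hne x _ (fun y hy => ?_)
      by_contra hcon
      push_neg at hcon
      have hxT : x ∈ closure Ω \ K := ⟨subset_closure hx.1, hx.2⟩
      have hythick : y ∈ Metric.thickening δ (closure Ω \ K) :=
        (Metric.mem_thickening_iff).2 ⟨x, hxT, by rwa [dist_comm]⟩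
      exact hy (hδsub hythick)
    -- split the integral
    set f : Euc (n+1) → ℝ≥0∞ := fun x => ENNReal.ofReal ((min (infDist x Ωᶜ) 1) ^ (-σ)) with hf
    have hsplit : Ω ⊆ (Ω \ K) ∪ ⋃ p ∈ t, (Ω ∩ ball p (r p)) := by
      intro x hx
      by_cases hxK : x ∈ K
      · right
        obtain ⟨p, hpt, hpb⟩ := Set.mem_iUnion₂.1 hxK
        exact Set.mem_iUnion₂.2 ⟨p, hpt, hx, hpb⟩
      · exact Or.inl ⟨hx, hxK⟩
    have hpiece1 : ∫⁻ x in Ω \ K, f x < ⊤ := by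
      have hb : ∀ x ∈ Ω \ K, f x ≤ ENNReal.ofReal ((min δ 1) ^ (-σ)) := by
        intro x hx
        refine ENNReal.ofReal_le_ofReal ?_
        refine Real.rpow_le_rpow_of_nonpos (lt_min hδ0 one_pos) ?_ (by linarith)
        exact min_le_min (hδbound x hx) le_rfl
      calc ∫⁻ x in Ω \ K, f x ≤ ∫⁻ _ in Ω \ K, ENNReal.ofReal ((min δ 1) ^ (-σ)) :=
            setLIntegral_mono measurable_const hb
      _ = ENNReal.ofReal ((min δ 1) ^ (-σ)) * volume (Ω \ K) := setLIntegral_const _ _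
      _ < ⊤ := ENNReal.mul_lt_top ofReal_lt_top
          (lt_of_le_of_lt (measure_mono Set.diff_subset) hΩb.measure_lt_top)
    have hpiece2 : ∫⁻ x in ⋃ p ∈ t, (Ω ∩ ball p (r p)), f x < ⊤ := by
      have hrw : ⋃ p ∈ t, (Ω ∩ ball p (r p)) = ⋃ p : t, (Ω ∩ ball (p : Euc (n+1)) (r p)) := by
        ext x; simp
      rw [hrw]
      refine lt_of_le_of_lt (lintegral_iUnion_le _ _) ?_
      rw [tsum_fintype]
      refine ENNReal.sum_lt_top.2 (fun p _ => ?_)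
      exact hrint p (htsub p p.2)
    calc ∫⁻ x in Ω, f x ≤ ∫⁻ x in (Ω \ K) ∪ ⋃ p ∈ t, (Ω ∩ ball p (r p)), f x :=
          lintegral_mono_set hsplit
    _ ≤ (∫⁻ x in Ω \ K, f x) + ∫⁻ x in ⋃ p ∈ t, (Ω ∩ ball p (r p)), f x := by
        rw [← lintegral_add_measure]
        exact lintegral_mono' (Measure.restrict_union_le _ _) le_rfl
    _ < ⊤ := ENNReal.add_lt_top.2 ⟨hpiece1, hpiece2⟩

lemma kappa_le (N : ℕ) {σ : ℝ} (hσ0 : 0 < σ) {k : Euc N → Euc N → ℝ} (hk : IsKernel N σ k)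
    {C : ℝ} (hC : ∀ x, (∫⁻ y, ENNReal.ofReal (min 1 (‖x - y‖ ^ σ) * k x y)) ≤ ENNReal.ofReal C)
    (Ω : Set (Euc N)) (hΩo : IsOpen Ω) :
    ∀ x ∈ Ω, kappa k Ω x ≤
      ENNReal.ofReal ((min (infDist x Ωᶜ) 1) ^ (-σ)) * ENNReal.ofReal C := by
  intro x hx
  rcases Set.eq_empty_or_nonempty (Ωᶜ : Set (Euc N)) with hne | hne
  · rw [kappa, hne]
    simp
  · set d := infDist x Ωᶜ with hd
    set m := min d 1 with hm
    obtain ⟨ε, hε0, hball⟩ := Metric.isOpen_iff.1 hΩo x hx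
    have hd0 : 0 < d := by
      have hεd : ε ≤ d := by
        refine le_infDist' hne x ε (fun y hy => ?_)
        by_contra hcon
        push_neg at hcon
        exact hy (hball (mem_ball.2 (by rwa [dist_comm])))
      linarith
    have hm0 : 0 < m := lt_min hd0 one_pos
    have hm1 : m ≤ 1 := min_le_right _ _
    have hptwise : ∀ y ∈ (Ωᶜ : Set (Euc N)), ENNReal.ofReal (k x y) ≤
        ENNReal.ofReal (m ^ (-σ)) * ENNReal.ofReal (min 1 (‖x - y‖ ^ σ) * k x y) := by
      intro y hy
      rw [← ENNReal.ofReal_mul (Real.rpow_nonneg hm0.le _)]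
      refine ENNReal.ofReal_le_ofReal ?_
      have hdy : d ≤ dist x y := infDist_le_dist_of_mem hy
      have hnorm : dist x y = ‖x - y‖ := dist_eq_norm x y
      have hminle : m ^ σ ≤ min 1 (‖x - y‖ ^ σ) := by
        refine le_min ?_ ?_
        · exact Real.rpow_le_one hm0.le hm1 hσ0.le
        · refine Real.rpow_le_rpow hm0.le ?_ hσ0.le
          rw [← hnorm]
          exact le_trans (min_le_left _ _) hdy
      have hknn := hk.2.1 x y
      have hid : m ^ (-σ) * m ^ σ = 1 := by
        rw [← Real.rpow_add hm0]; simp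
      calc k x y = (m ^ (-σ) * m ^ σ) * k x y := by rw [hid, one_mul]
      _ = m ^ (-σ) * (m ^ σ * k x y) := by ring
      _ ≤ m ^ (-σ) * (min 1 (‖x - y‖ ^ σ) * k x y) := by
          refine mul_le_mul_of_nonneg_left ?_ (Real.rpow_nonneg hm0.le _)
          exact mul_le_mul_of_nonneg_right hminle hknn
    have hrpowσ : Measurable fun u : ℝ => u ^ σ := by measurability
    have hmeas : Measurable fun y : Euc N =>
        ENNReal.ofReal (m ^ (-σ)) * ENNReal.ofReal (min 1 (‖x - y‖ ^ σ) * k x y) := by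
      refine measurable_const.mul (Measurable.ennreal_ofReal (Measurable.mul ?_ ?_))
      · refine Measurable.min measurable_const ?_
        exact hrpowσ.comp ((measurable_const.sub measurable_id).norm)
      · exact hk.1.comp (measurable_prodMk_left)
    calc kappa k Ω x
        ≤ ∫⁻ y in Ωᶜ, ENNReal.ofReal (m ^ (-σ))
            * ENNReal.ofReal (min 1 (‖x - y‖ ^ σ) * k x y) :=
          setLIntegral_mono hmeas hptwise
    _ = ENNReal.ofReal (m ^ (-σ))
          * ∫⁻ y in Ωᶜ, ENNReal.ofReal (min 1 (‖x - y‖ ^ σ) * k x y) :=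
        lintegral_const_mul' _ _ ofReal_ne_top
    _ ≤ ENNReal.ofReal (m ^ (-σ)) * ENNReal.ofReal C := by
        gcongr
        exact le_trans (setLIntegral_le_lintegral _ _) (hC x)

lemma A_lt_top (n : ℕ) {σ : ℝ} (hσ0 : 0 < σ) (hσ1 : σ < 1)
    {k : Euc (n+1) → Euc (n+1) → ℝ} (hk : IsKernel (n+1) σ k)
    (Ω : Set (Euc (n+1))) (hΩo : IsOpen Ω) (hΩb : Bornology.IsBounded Ω)
    (hΩl : HasLipschitzBoundary (n+1) Ω) :
    ∫⁻ x in Ω, kappa k Ω x < ⊤ := by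
  obtain ⟨C, hC⟩ := hk.2.2.2
  have hrpow : Measurable fun u : ℝ => u ^ (-σ) := by measurability
  have hmeas : Measurable fun x : Euc (n+1) =>
      ENNReal.ofReal ((min (infDist x Ωᶜ) 1) ^ (-σ)) * ENNReal.ofReal C := by
    refine Measurable.mul_const ?_ _
    refine Measurable.ennreal_ofReal (hrpow.comp ?_)
    exact ((continuous_infDist_pt _).min continuous_const).measurable
  calc ∫⁻ x in Ω, kappa k Ω x
      ≤ ∫⁻ x in Ω, ENNReal.ofReal ((min (infDist x Ωᶜ) 1) ^ (-σ)) * ENNReal.ofReal C :=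
        setLIntegral_mono hmeas (kappa_le (n+1) hσ0 hk hC Ω hΩo)
  _ = (∫⁻ x in Ω, ENNReal.ofReal ((min (infDist x Ωᶜ) 1) ^ (-σ))) * ENNReal.ofReal C :=
      lintegral_mul_const' _ _ ofReal_ne_top
  _ < ⊤ := ENNReal.mul_lt_top (crux_lt_top n hσ0 hσ1 Ω hΩo hΩb hΩl) ofReal_lt_top

/-- the indicator function of a bounded Lipschitz set belongs to `D^k(ℝ^N)`. -/
theorem indicator_mem_Dk
    {N : ℕ} (hN : 0 < N) {σ : ℝ} (hσ0 : 0 < σ) (hσ1 : σ < 1)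
    (k : Euc N → Euc N → ℝ) (hk : IsKernel N σ k)
    (Ω : Set (Euc N)) (hΩo : IsOpen Ω) (hΩb : Bornology.IsBounded Ω)
    (hΩl : HasLipschitzBoundary N Ω) :
    MemLp (Set.indicator Ω (fun _ => (1:ℝ))) 2 volume ∧
    quadForm k Set.univ (Set.indicator Ω (fun _ => (1:ℝ))) < ⊤ ∧
    (∫⁻ x in Ω, kappa k Ω x) < ⊤ := by
  obtain ⟨n, rfl⟩ : ∃ n, N = n + 1 := ⟨N - 1, (Nat.succ_pred_eq_of_pos hN).symm⟩
  have hΩm : MeasurableSet Ω := hΩo.measurableSet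
  have hA : ∫⁻ x in Ω, kappa k Ω x < ⊤ := A_lt_top n hσ0 hσ1 hk Ω hΩo hΩb hΩl
  refine ⟨?_, ?_, hA⟩
  · exact memLp_indicator_const 2 hΩm (1:ℝ) (Or.inr hΩb.measure_lt_top.ne)
  · set u := Set.indicator Ω (fun _ => (1:ℝ)) with hu
    set T1 : Euc (n+1) → Euc (n+1) → ℝ≥0∞ := fun x y =>
      Set.indicator Ω (fun _ => (1:ℝ≥0∞)) x *
        (Set.indicator Ωᶜ (fun _ => (1:ℝ≥0∞)) y * ENNReal.ofReal (k x y)) with hT1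
    set T2 : Euc (n+1) → Euc (n+1) → ℝ≥0∞ := fun x y =>
      Set.indicator Ωᶜ (fun _ => (1:ℝ≥0∞)) x *
        (Set.indicator Ω (fun _ => (1:ℝ≥0∞)) y * ENNReal.ofReal (k x y)) with hT2
    have hptwise : ∀ x y, ENNReal.ofReal ((u x - u y) ^ 2 * k x y) ≤ T1 x y + T2 x y := by
      intro x y
      have hknn := hk.2.1 x y
      by_cases hx : x ∈ Ω <;> by_cases hy : y ∈ Ω <;>
        simp [hT1, hT2, hu, Set.indicator_of_mem, Set.indicator_of_notMem, hx, hy, hknn]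
    have hkm : Measurable fun p : Euc (n+1) × Euc (n+1) => ENNReal.ofReal (k p.1 p.2) :=
      hk.1.ennreal_ofReal
    have hT1m : Measurable (Function.uncurry T1) := by
      refine Measurable.mul ?_ (Measurable.mul ?_ hkm)
      · exact (measurable_const.indicator hΩm).comp measurable_fst
      · exact (measurable_const.indicator hΩm.compl).comp measurable_snd
    have hT2m : Measurable (Function.uncurry T2) := by
      refine Measurable.mul ?_ (Measurable.mul ?_ hkm)
      · exact (measurable_const.indicator hΩm.compl).comp measurable_fst
      · exact (measurable_const.indicator hΩm).comp measurable_snd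
    have hT1y : ∀ x, Measurable fun y => T1 x y := fun x => hT1m.comp measurable_prodMk_left
    have hT2y : ∀ x, Measurable fun y => T2 x y := fun x => hT2m.comp measurable_prodMk_left
    -- value of double integral of T1
    have hdouble1 : ∫⁻ x, ∫⁻ y, T1 x y = ∫⁻ x in Ω, kappa k Ω x := by
      have hinner : ∀ x, ∫⁻ y, T1 x y
          = Set.indicator Ω (fun _ => (1:ℝ≥0∞)) x * kappa k Ω x := by
        intro x
        rw [hT1]
        simp only
        rw [lintegral_const_mul' _ _ (by
          by_cases hx : x ∈ Ω
          · simp [Set.indicator_of_mem hx]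
          · simp [Set.indicator_of_notMem hx])]
        congr 1
        have heq : ∀ y, Set.indicator Ωᶜ (fun _ => (1:ℝ≥0∞)) y * ENNReal.ofReal (k x y)
            = Set.indicator Ωᶜ (fun y => ENNReal.ofReal (k x y)) y := by
          intro y
          by_cases hy : y ∈ Ωᶜ
          · simp [Set.indicator_of_mem hy]
          · simp [Set.indicator_of_notMem hy]
        simp_rw [heq]
        rw [lintegral_indicator hΩm.compl]
        rfl
      simp_rw [hinner]
      have heq2 : ∀ x, Set.indicator Ω (fun _ => (1:ℝ≥0∞)) x * kappa k Ω x
          = Set.indicator Ω (fun x => kappa k Ω x) x := by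
        intro x
        by_cases hx : x ∈ Ω
        · simp [Set.indicator_of_mem hx]
        · simp [Set.indicator_of_notMem hx]
      simp_rw [heq2]
      rw [lintegral_indicator hΩm]
    have hdouble2 : ∫⁻ x, ∫⁻ y, T2 x y = ∫⁻ y in Ω, kappa k Ω y := by
      rw [lintegral_lintegral_swap hT2m.aemeasurable]
      have hinner : ∀ y, ∫⁻ x, T2 x y
          = Set.indicator Ω (fun _ => (1:ℝ≥0∞)) y * kappa k Ω y := by
        intro y
        rw [hT2]
        simp only
        have hre : ∀ x, Set.indicator Ωᶜ (fun _ => (1:ℝ≥0∞)) x *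
            (Set.indicator Ω (fun _ => (1:ℝ≥0∞)) y * ENNReal.ofReal (k x y))
            = Set.indicator Ω (fun _ => (1:ℝ≥0∞)) y *
              (Set.indicator Ωᶜ (fun x => ENNReal.ofReal (k y x)) x) := by
          intro x
          rw [hk.2.2.1 x y]
          by_cases hx : x ∈ Ωᶜ
          · simp [Set.indicator_of_mem hx]
          · simp [Set.indicator_of_notMem hx]
        simp_rw [hre]
        rw [lintegral_const_mul' _ _ (by
          by_cases hy : y ∈ Ω
          · simp [Set.indicator_of_mem hy]
          · simp [Set.indicator_of_notMem hy])]
        congr 1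
        rw [lintegral_indicator hΩm.compl]
        rfl
      simp_rw [hinner]
      have heq2 : ∀ y, Set.indicator Ω (fun _ => (1:ℝ≥0∞)) y * kappa k Ω y
          = Set.indicator Ω (fun y => kappa k Ω y) y := by
        intro y
        by_cases hy : y ∈ Ω
        · simp [Set.indicator_of_mem hy]
        · simp [Set.indicator_of_notMem hy]
      simp_rw [heq2]
      rw [lintegral_indicator hΩm]
    have hbound : ∫⁻ x, ∫⁻ y, ENNReal.ofReal ((u x - u y) ^ 2 * k x y)
        ≤ (∫⁻ x, ∫⁻ y, T1 x y) + ∫⁻ x, ∫⁻ y, T2 x y := by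
      rw [← lintegral_add_left (show Measurable fun x => ∫⁻ y, T1 x y from hT1m.lintegral_prod_right')]
      refine lintegral_mono (fun x => ?_)
      rw [← lintegral_add_left (hT1y x)]
      exact lintegral_mono (fun y => hptwise x y)
    rw [quadForm, Measure.restrict_univ]
    refine ENNReal.mul_lt_top (by norm_num) ?_
    refine lt_of_le_of_lt hbound ?_
    rw [hdouble1, hdouble2]
    exact ENNReal.add_lt_top.2 ⟨hA, hA⟩
end
end

section
/- Let σ ∈ (0,2] and let k be a kernel of order σ. Let u ∈ D^k(ℝ^N). Then there exists a sequence (u_n) in D^k(ℝ^N) such that each u_n vanishes outside some bounded set, and u_n → u in D^k(ℝ^N), i.e. ‖u−u_n‖_{L²(ℝ^N)} → 0 and b_k(u−u_n) → 0 as n → ∞. Moreover, if u ≥ 0 a.e., then (u_n) can be chosen so that in addition 0 ≤ u_n ≤ u_{n+1} ≤ u almost everywhere for all n. -/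
open MeasureTheory ENNReal Metric Set Filter

noncomputable section

namespace ApproxAux
variable {N : ℕ}

/-- cutoff function -/
def cutoff (n : ℕ) (x : Euc N) : ℝ := min 1 (max 0 ((n:ℝ) + 1 - ‖x‖))

lemma cutoff_nonneg (n : ℕ) (x : Euc N) : 0 ≤ cutoff n x := le_min zero_le_one (le_max_left _ _)

lemma cutoff_le_one (n : ℕ) (x : Euc N) : cutoff n x ≤ 1 := min_le_left _ _

lemma cutoff_mono (n : ℕ) (x : Euc N) : cutoff n x ≤ cutoff (n+1) x := by
  unfold cutoff
  have : (n:ℝ) + 1 - ‖x‖ ≤ ((n:ℕ)+1:ℕ) + 1 - ‖x‖ := by push_cast; linarith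
  exact min_le_min le_rfl (max_le_max le_rfl this)

lemma cutoff_eq_one {n : ℕ} {x : Euc N} (h : ‖x‖ ≤ n) : cutoff n x = 1 := by
  unfold cutoff
  have h1 : (1:ℝ) ≤ (n:ℝ) + 1 - ‖x‖ := by linarith
  rw [min_eq_left]; exact le_trans h1 (le_max_right _ _)

lemma cutoff_eq_zero {n : ℕ} {x : Euc N} (h : (n:ℝ) + 1 ≤ ‖x‖) : cutoff n x = 0 := by
  unfold cutoff
  rw [max_eq_left (by linarith), min_eq_right zero_le_one]

lemma cutoff_continuous (n : ℕ) : Continuous (cutoff n : Euc N → ℝ) := by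
  unfold cutoff; fun_prop

lemma abs_cutoff_sub_le (n : ℕ) (x y : Euc N) :
    |cutoff n x - cutoff n y| ≤ min 1 ‖x - y‖ := by
  refine le_min ?_ ?_
  · have h1 := cutoff_nonneg n x; have h2 := cutoff_nonneg n y
    have h3 := cutoff_le_one n x; have h4 := cutoff_le_one n y
    rw [abs_le]; constructor <;> linarith
  · have key : ∀ a b : ℝ, |min 1 (max 0 a) - min 1 (max 0 b)| ≤ |a - b| := by
      intro a b
      calc |min 1 (max 0 a) - min 1 (max 0 b)|
          ≤ max |(1:ℝ)-1| |max 0 a - max 0 b| := abs_min_sub_min_le_max _ _ _ _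
        _ = |max 0 a - max 0 b| := by simp
        _ = |max a 0 - max b 0| := by rw [max_comm 0 a, max_comm 0 b]
        _ ≤ |a - b| := abs_max_sub_max_le_abs _ _ _
    have := key ((n:ℝ) + 1 - ‖x‖) ((n:ℝ) + 1 - ‖y‖)
    unfold cutoff
    refine this.trans ?_
    have : (n:ℝ) + 1 - ‖x‖ - ((n:ℝ) + 1 - ‖y‖) = ‖y‖ - ‖x‖ := by ring
    rw [this, abs_sub_comm]
    exact abs_norm_sub_norm_le x y

end ApproxAux
namespace ApproxAux
lemma min_sq_le {σ m : ℝ} (hσ0 : 0 < σ) (hσ2 : σ ≤ 2) (hm : 0 ≤ m) :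
    (min 1 m)^2 ≤ min 1 (m ^ σ) := by
  rcases le_total m 1 with h | h
  · rw [min_eq_right h]
    rcases eq_or_lt_of_le hm with h0 | h0
    · simp [← h0, Real.zero_rpow hσ0.ne']
    · have h1 : m ^ (2:ℝ) ≤ m ^ σ := Real.rpow_le_rpow_of_exponent_ge h0 h hσ2
      have h2 : m ^ σ ≤ 1 := Real.rpow_le_one hm h hσ0.le
      rw [min_eq_right h2]
      calc m^2 = m ^ (2:ℝ) := by rw [← Real.rpow_natCast m 2]; norm_num
        _ ≤ m ^ σ := h1
  · rw [min_eq_left h]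
    have : (1:ℝ) ≤ m ^ σ := Real.one_le_rpow h hσ0.le
    rw [min_eq_left this]; norm_num

lemma pointwise_bound {σ : ℝ} (hσ0 : 0 < σ) (hσ2 : σ ≤ 2) (kxy a b c d m : ℝ)
    (hk0 : 0 ≤ kxy) (hm : 0 ≤ m) (hc0 : 0 ≤ c) (hc1 : c ≤ 1) (hd0 : 0 ≤ d) (hd1 : d ≤ 1)
    (hcd : |c - d| ≤ min 1 m) :
    ENNReal.ofReal ((c * a - d * b)^2 * kxy) ≤
      ENNReal.ofReal (2 * ((a - b)^2 * kxy)) +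
      ENNReal.ofReal (2 * b^2 * (min 1 (m ^ σ) * kxy)) := by
  have hG : (c * a - d * b)^2 ≤ 2 * (a - b)^2 + 2 * b^2 * min 1 (m ^ σ) := by
    have e1 : c * a - d * b = c * (a - b) + b * (c - d) := by ring
    have h2 : (c * (a - b) + b * (c - d))^2 ≤ 2 * (c * (a-b))^2 + 2 * (b * (c-d))^2 := by
      nlinarith [sq_nonneg (c * (a-b) - b * (c-d))]
    have h3 : (c * (a-b))^2 ≤ (a - b)^2 := by
      have hcsq : c^2 ≤ 1 := by nlinarith
      nlinarith [mul_le_mul_of_nonneg_right hcsq (sq_nonneg (a-b))]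
    have h4 : (b * (c-d))^2 ≤ b^2 * min 1 (m ^ σ) := by
      have h5 : (c - d)^2 ≤ (min 1 m)^2 := by
        rw [← sq_abs (c-d)]
        exact pow_le_pow_left₀ (abs_nonneg _) hcd 2
      have := h5.trans (min_sq_le hσ0 hσ2 hm)
      calc (b * (c-d))^2 = b^2 * (c-d)^2 := by ring
        _ ≤ b^2 * min 1 (m ^ σ) := by nlinarith [sq_nonneg b]
    rw [e1]; nlinarith
  calc ENNReal.ofReal ((c * a - d * b)^2 * kxy)
      ≤ ENNReal.ofReal ((2 * (a - b)^2 + 2 * b^2 * min 1 (m ^ σ)) * kxy) := by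
        apply ENNReal.ofReal_le_ofReal
        exact mul_le_mul_of_nonneg_right hG hk0
    _ = ENNReal.ofReal (2 * ((a - b)^2 * kxy) + 2 * b^2 * (min 1 (m ^ σ) * kxy)) := by
        ring_nf
    _ ≤ _ := ENNReal.ofReal_add_le
end ApproxAux
namespace ApproxAux
variable {N : ℕ}

lemma quadForm_eq_prod (k : Euc N → Euc N → ℝ)
    (hkm : Measurable (fun p : Euc N × Euc N => k p.1 p.2))
    (f : Euc N → ℝ) (hf : Measurable f) :
    quadForm k Set.univ f =
      2⁻¹ * ∫⁻ p : Euc N × Euc N, ENNReal.ofReal ((f p.1 - f p.2)^2 * k p.1 p.2)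
        ∂((volume : Measure (Euc N)).prod volume) := by
  unfold quadForm
  rw [Measure.restrict_univ, one_div]
  have hmeas : Measurable (fun p : Euc N × Euc N =>
      ENNReal.ofReal ((f p.1 - f p.2)^2 * k p.1 p.2)) := by
    apply ENNReal.measurable_ofReal.comp
    exact (((hf.comp measurable_fst).sub (hf.comp measurable_snd)).pow_const 2).mul hkm
  rw [lintegral_lintegral hmeas.aemeasurable]

lemma dom_lt_top {σ : ℝ} (hσ0 : 0 < σ) (k : Euc N → Euc N → ℝ) (hk : IsKernel N σ k)
    (u : Euc N → ℝ) (hum : Measurable u) (huL2 : MemLp u 2 volume)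
    (huq : quadForm k Set.univ u < ⊤)
    (hL2' : ∫⁻ x, ENNReal.ofReal ((u x)^2) < ⊤) :
    ∫⁻ p : Euc N × Euc N, (ENNReal.ofReal (2 * ((u p.1 - u p.2)^2 * k p.1 p.2)) +
      ENNReal.ofReal (2 * (u p.2)^2 * (min 1 (‖p.1 - p.2‖ ^ σ) * k p.1 p.2)))
      ∂((volume : Measure (Euc N)).prod volume) < ⊤ := by
  obtain ⟨hkm, hk0, hks, C, hC⟩ := hk
  have hsub : Measurable (fun p : Euc N × Euc N => (u p.1 - u p.2)^2 * k p.1 p.2) :=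
    (((hum.comp measurable_fst).sub (hum.comp measurable_snd)).pow_const 2).mul hkm
  have hm1 : Measurable (fun p : Euc N × Euc N =>
      ENNReal.ofReal (2 * ((u p.1 - u p.2)^2 * k p.1 p.2))) :=
    ENNReal.measurable_ofReal.comp ((measurable_const.mul hsub))
  have hrpow : Measurable (fun p : Euc N × Euc N => min 1 (‖p.1 - p.2‖ ^ σ)) := by
    apply measurable_const.min
    exact (Real.continuous_rpow_const hσ0.le).measurable.comp
      (measurable_fst.sub measurable_snd).norm
  have hm2 : Measurable (fun p : Euc N × Euc N =>
      ENNReal.ofReal (2 * (u p.2)^2 * (min 1 (‖p.1 - p.2‖ ^ σ) * k p.1 p.2))) :=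
    ENNReal.measurable_ofReal.comp
      (((measurable_const.mul ((hum.comp measurable_snd).pow_const 2))).mul (hrpow.mul hkm))
  rw [lintegral_add_left hm1]
  refine ENNReal.add_lt_top.mpr ⟨?_, ?_⟩
  · have e : ∀ p : Euc N × Euc N, ENNReal.ofReal (2 * ((u p.1 - u p.2)^2 * k p.1 p.2)) =
        2 * ENNReal.ofReal ((u p.1 - u p.2)^2 * k p.1 p.2) := by
      intro p
      rw [ENNReal.ofReal_mul (by norm_num)]
      norm_num
    simp_rw [e]
    rw [lintegral_const_mul' _ _ (by norm_num)]
    have hq := quadForm_eq_prod k hkm u hum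
    apply ENNReal.mul_lt_top (by norm_num)
    have : (∫⁻ p : Euc N × Euc N, ENNReal.ofReal ((u p.1 - u p.2)^2 * k p.1 p.2)
        ∂((volume : Measure (Euc N)).prod volume)) = 2 * quadForm k Set.univ u := by
      rw [hq, ← mul_assoc, ENNReal.mul_inv_cancel (by norm_num) (by norm_num), one_mul]
    rw [this]
    exact ENNReal.mul_lt_top (by norm_num) huq
  · rw [lintegral_prod_symm _ hm2.aemeasurable]
    have step : ∀ y : Euc N, (∫⁻ x, ENNReal.ofReal
        (2 * (u y)^2 * (min 1 (‖x - y‖ ^ σ) * k x y))) ≤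
        ENNReal.ofReal (2 * (u y)^2) * ENNReal.ofReal C := by
      intro y
      have e2 : ∀ x : Euc N, ENNReal.ofReal (2 * (u y)^2 * (min 1 (‖x - y‖ ^ σ) * k x y)) =
          ENNReal.ofReal (2 * (u y)^2) * ENNReal.ofReal (min 1 (‖x - y‖ ^ σ) * k x y) := by
        intro x
        rw [ENNReal.ofReal_mul (by positivity)]
      simp_rw [e2]
      rw [lintegral_const_mul' _ _ ENNReal.ofReal_ne_top]
      apply mul_le_mul_right
      have e3 : ∀ x : Euc N, ENNReal.ofReal (min 1 (‖x - y‖ ^ σ) * k x y) =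
          ENNReal.ofReal (min 1 (‖y - x‖ ^ σ) * k y x) := by
        intro x
        rw [norm_sub_rev, hks x y]
      simp_rw [e3]
      exact hC y
    calc (∫⁻ y, ∫⁻ x, ENNReal.ofReal (2 * (u y)^2 * (min 1 (‖x - y‖ ^ σ) * k x y)))
        ≤ ∫⁻ y, ENNReal.ofReal (2 * (u y)^2) * ENNReal.ofReal C := lintegral_mono step
      _ = (∫⁻ y, ENNReal.ofReal (2 * (u y)^2)) * ENNReal.ofReal C :=
          lintegral_mul_const' _ _ ENNReal.ofReal_ne_top
      _ < ⊤ := by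
          apply ENNReal.mul_lt_top _ ENNReal.ofReal_lt_top
          have e4 : ∀ y : Euc N, ENNReal.ofReal (2 * (u y)^2) =
              2 * ENNReal.ofReal ((u y)^2) := by
            intro y; rw [ENNReal.ofReal_mul (by norm_num)]; norm_num
          simp_rw [e4]
          rw [lintegral_const_mul' _ _ (by norm_num)]
          exact ENNReal.mul_lt_top (by norm_num) hL2'

end ApproxAux
namespace ApproxAux

lemma enn_sq (v : ℝ) : (‖v‖₊ : ℝ≥0∞) ^ ((2:ℝ≥0∞).toReal) = ENNReal.ofReal (v^2) := by
  calc (‖v‖₊ : ℝ≥0∞) ^ ((2:ℝ≥0∞).toReal)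
      = (‖v‖₊ : ℝ≥0∞) ^ (2:ℕ) := by
        rw [ENNReal.toReal_ofNat, ← ENNReal.rpow_natCast]; norm_num
    _ = (ENNReal.ofReal |v|) ^ (2:ℕ) := by rw [← Real.enorm_eq_ofReal_abs]; rfl
    _ = ENNReal.ofReal (|v| ^ 2) := (ENNReal.ofReal_pow (abs_nonneg _) 2).symm
    _ = ENNReal.ofReal (v^2) := by rw [sq_abs]

lemma l2_lintegral_lt_top {N : ℕ} (u : Euc N → ℝ) (huL2 : MemLp u 2 volume) :
    ∫⁻ x, ENNReal.ofReal ((u x)^2) < ⊤ := by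
  have h := (eLpNorm_lt_top_iff_lintegral_rpow_enorm_lt_top (f := u)
      (two_ne_zero) (ENNReal.ofNat_ne_top)).mp huL2.2
  exact lt_of_le_of_lt (le_of_eq (lintegral_congr fun x => (enn_sq (u x)).symm)) h

lemma master {N : ℕ} {σ : ℝ} (hσ0 : 0 < σ) (hσ2 : σ ≤ 2)
    (k : Euc N → Euc N → ℝ) (hk : IsKernel N σ k)
    (u : Euc N → ℝ) (hum : Measurable u) (huL2 : MemLp u 2 volume)
    (huq : quadForm k Set.univ u < ⊤) :
    (∀ n : ℕ, Measurable (fun x => cutoff n x * u x) ∧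
       MemLp (fun x => cutoff n x * u x) 2 volume ∧
       quadForm k Set.univ (fun x => cutoff n x * u x) < ⊤ ∧
       ∃ s : Set (Euc N), Bornology.IsBounded s ∧ ∀ x ∉ s, cutoff n x * u x = 0) ∧
    Filter.Tendsto (fun n : ℕ => eLpNorm (fun x => u x - cutoff n x * u x) 2 volume)
      Filter.atTop (nhds 0) ∧
    Filter.Tendsto (fun n : ℕ => quadForm k Set.univ (fun x => u x - cutoff n x * u x))
      Filter.atTop (nhds 0) := by
  have hL2' := l2_lintegral_lt_top u huL2
  have hdom := dom_lt_top hσ0 k hk u hum huL2 huq hL2'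
  obtain ⟨hkm, hk0, hks, C, hC⟩ := hk
  set H : Euc N × Euc N → ℝ≥0∞ := fun p =>
    ENNReal.ofReal (2 * ((u p.1 - u p.2)^2 * k p.1 p.2)) +
    ENNReal.ofReal (2 * (u p.2)^2 * (min 1 (‖p.1 - p.2‖ ^ σ) * k p.1 p.2)) with hH
  have hun : ∀ n : ℕ, Measurable (fun x : Euc N => cutoff n x * u x) :=
    fun n => (cutoff_continuous n).measurable.mul hum
  have hdn : ∀ n : ℕ, Measurable (fun x : Euc N => u x - cutoff n x * u x) :=
    fun n => hum.sub (hun n)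
  -- pointwise bounds
  have boundUn : ∀ (n : ℕ) (x y : Euc N),
      ENNReal.ofReal ((cutoff n x * u x - cutoff n y * u y)^2 * k x y) ≤ H (x, y) := by
    intro n x y
    exact pointwise_bound hσ0 hσ2 (k x y) (u x) (u y) (cutoff n x) (cutoff n y) ‖x - y‖
      (hk0 x y) (norm_nonneg _) (cutoff_nonneg n x) (cutoff_le_one n x)
      (cutoff_nonneg n y) (cutoff_le_one n y) (abs_cutoff_sub_le n x y)
  have boundDn : ∀ (n : ℕ) (x y : Euc N),
      ENNReal.ofReal (((u x - cutoff n x * u x) - (u y - cutoff n y * u y))^2 * k x y)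
        ≤ H (x, y) := by
    intro n x y
    have e : (u x - cutoff n x * u x) - (u y - cutoff n y * u y) =
        (1 - cutoff n x) * u x - (1 - cutoff n y) * u y := by ring
    rw [e]
    refine pointwise_bound hσ0 hσ2 (k x y) (u x) (u y) (1 - cutoff n x) (1 - cutoff n y)
      ‖x - y‖ (hk0 x y) (norm_nonneg _) (by linarith [cutoff_le_one n x])
      (by linarith [cutoff_nonneg n x]) (by linarith [cutoff_le_one n y])
      (by linarith [cutoff_nonneg n y]) ?_
    have : (1 - cutoff n x) - (1 - cutoff n y) = -(cutoff n x - cutoff n y) := by ring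
    rw [this, abs_neg]
    exact abs_cutoff_sub_le n x y
  -- eventual vanishing
  have hev : ∀ x : Euc N, ∀ᶠ n : ℕ in Filter.atTop, cutoff n x = 1 := by
    intro x
    refine Filter.eventually_atTop.2 ⟨⌈‖x‖⌉₊, fun n hn => cutoff_eq_one ?_⟩
    exact (Nat.le_ceil _).trans (Nat.cast_le.2 hn)
  refine ⟨fun n => ⟨hun n, ?_, ?_, ?_⟩, ?_, ?_⟩
  · -- MemLp
    refine huL2.of_le (hun n).aestronglyMeasurable (Filter.Eventually.of_forall fun x => ?_)
    rw [Real.norm_eq_abs, Real.norm_eq_abs, abs_mul]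
    calc |cutoff n x| * |u x| ≤ 1 * |u x| := by
          apply mul_le_mul_of_nonneg_right _ (abs_nonneg _)
          rw [abs_of_nonneg (cutoff_nonneg n x)]; exact cutoff_le_one n x
      _ = |u x| := one_mul _
  · -- quadForm < ⊤
    rw [quadForm_eq_prod k hkm _ (hun n)]
    refine ENNReal.mul_lt_top (by norm_num) (lt_of_le_of_lt ?_ hdom)
    exact lintegral_mono fun p => boundUn n p.1 p.2
  · -- bounded support
    refine ⟨Metric.closedBall (0 : Euc N) ((n:ℝ)+1), Metric.isBounded_closedBall, fun x hx => ?_⟩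
    rw [Metric.mem_closedBall, dist_zero_right] at hx
    rw [cutoff_eq_zero (le_of_not_ge hx), zero_mul]
  · -- L² convergence
    have hJ : Filter.Tendsto (fun n : ℕ => ∫⁻ x, ENNReal.ofReal ((u x - cutoff n x * u x)^2))
        Filter.atTop (nhds 0) := by
      have := tendsto_lintegral_of_dominated_convergence
        (μ := (volume : Measure (Euc N)))
        (F := fun n x => ENNReal.ofReal ((u x - cutoff n x * u x)^2))
        (f := fun _ => 0) (bound := fun x => ENNReal.ofReal ((u x)^2))
        (fun n => ENNReal.measurable_ofReal.comp ((hdn n).pow_const 2))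
        (fun n => Filter.Eventually.of_forall fun x => by
          apply ENNReal.ofReal_le_ofReal
          have h1 := cutoff_nonneg n x
          have h2 := cutoff_le_one n x
          nlinarith [sq_nonneg (u x), sq_nonneg (cutoff n x * u x),
            sq_nonneg ((1 - cutoff n x) * u x)])
        hL2'.ne
        (Filter.Eventually.of_forall fun x => by
          refine tendsto_const_nhds.congr' ?_
          filter_upwards [hev x] with n hn
          rw [hn]; norm_num)
      simpa using this
    have hsn : ∀ n : ℕ, eLpNorm (fun x => u x - cutoff n x * u x) 2 volume =
        (∫⁻ x, ENNReal.ofReal ((u x - cutoff n x * u x)^2)) ^ (1/(2:ℝ≥0∞).toReal) := by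
      intro n
      rw [eLpNorm_eq_lintegral_rpow_enorm_toReal two_ne_zero ENNReal.ofNat_ne_top]
      congr 1
      exact lintegral_congr fun x => enn_sq _
    have hcont := ((ENNReal.continuous_rpow_const
        (y := 1/(2:ℝ≥0∞).toReal)).tendsto 0).comp hJ
    have h0 : (0:ℝ≥0∞) ^ (1/(2:ℝ≥0∞).toReal) = 0 := by
      rw [ENNReal.toReal_ofNat]
      exact ENNReal.zero_rpow_of_pos (by norm_num)
    rw [Function.comp_def] at hcont
    rw [h0] at hcont
    exact Filter.Tendsto.congr (fun n => (hsn n).symm) hcont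
  · -- quadForm convergence
    have hK : Filter.Tendsto (fun n : ℕ => ∫⁻ p : Euc N × Euc N,
        ENNReal.ofReal (((u p.1 - cutoff n p.1 * u p.1) - (u p.2 - cutoff n p.2 * u p.2))^2
          * k p.1 p.2) ∂((volume : Measure (Euc N)).prod volume))
        Filter.atTop (nhds 0) := by
      have := tendsto_lintegral_of_dominated_convergence
        (μ := (volume : Measure (Euc N)).prod volume)
        (F := fun n (p : Euc N × Euc N) => ENNReal.ofReal
          (((u p.1 - cutoff n p.1 * u p.1) - (u p.2 - cutoff n p.2 * u p.2))^2 * k p.1 p.2))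
        (f := fun _ => 0) (bound := H)
        (fun n => ENNReal.measurable_ofReal.comp
          (((((hdn n).comp measurable_fst).sub ((hdn n).comp measurable_snd)).pow_const 2).mul hkm))
        (fun n => Filter.Eventually.of_forall fun p => boundDn n p.1 p.2)
        hdom.ne
        (Filter.Eventually.of_forall fun p => by
          refine tendsto_const_nhds.congr' ?_
          filter_upwards [hev p.1, hev p.2] with n h1 h2
          rw [h1, h2]
          norm_num)
      simpa using this
    have hQ : ∀ n : ℕ, quadForm k Set.univ (fun x => u x - cutoff n x * u x) =
        2⁻¹ * ∫⁻ p : Euc N × Euc N, ENNReal.ofReal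
          (((u p.1 - cutoff n p.1 * u p.1) - (u p.2 - cutoff n p.2 * u p.2))^2 * k p.1 p.2)
          ∂((volume : Measure (Euc N)).prod volume) :=
      fun n => quadForm_eq_prod k hkm _ (hdn n)
    have := ENNReal.Tendsto.const_mul (a := (2⁻¹ : ℝ≥0∞)) hK (Or.inr (by norm_num))
    rw [mul_zero] at this
    exact Filter.Tendsto.congr (fun n => (hQ n).symm) this

end ApproxAux

/-- approximation in `D^k(ℝ^N)` by functions vanishing outside bounded sets. -/
theorem approx_by_compactly_supported
    {N : ℕ} (hN : 0 < N) {σ : ℝ} (hσ0 : 0 < σ) (hσ2 : σ ≤ 2)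
    (k : Euc N → Euc N → ℝ) (hk : IsKernel N σ k)
    (u : Euc N → ℝ) (hum : Measurable u) (huL2 : MemLp u 2 volume)
    (huq : quadForm k Set.univ u < ⊤) :
    (∃ un : ℕ → Euc N → ℝ,
      (∀ n, Measurable (un n) ∧ MemLp (un n) 2 volume ∧ quadForm k Set.univ (un n) < ⊤ ∧
        ∃ s : Set (Euc N), Bornology.IsBounded s ∧ ∀ x ∉ s, un n x = 0) ∧
      Filter.Tendsto (fun n => eLpNorm (fun x => u x - un n x) 2 volume)
        Filter.atTop (nhds 0) ∧
      Filter.Tendsto (fun n => quadForm k Set.univ (fun x => u x - un n x))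
        Filter.atTop (nhds 0)) ∧
    ((∀ᵐ x ∂(volume : Measure (Euc N)), 0 ≤ u x) →
      ∃ un : ℕ → Euc N → ℝ,
        (∀ n, Measurable (un n) ∧ MemLp (un n) 2 volume ∧ quadForm k Set.univ (un n) < ⊤ ∧
          ∃ s : Set (Euc N), Bornology.IsBounded s ∧ ∀ x ∉ s, un n x = 0) ∧
        (∀ n, ∀ᵐ x ∂(volume : Measure (Euc N)),
          0 ≤ un n x ∧ un n x ≤ un (n + 1) x ∧ un n x ≤ u x) ∧
        Filter.Tendsto (fun n => eLpNorm (fun x => u x - un n x) 2 volume)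
          Filter.atTop (nhds 0) ∧
        Filter.Tendsto (fun n => quadForm k Set.univ (fun x => u x - un n x))
          Filter.atTop (nhds 0)) := by
  obtain ⟨hA, hB, hC⟩ := ApproxAux.master hσ0 hσ2 k hk u hum huL2 huq
  refine ⟨⟨fun n x => ApproxAux.cutoff n x * u x, hA, hB, hC⟩, fun hpos => ?_⟩
  refine ⟨fun n x => ApproxAux.cutoff n x * u x, hA, fun n => ?_, hB, hC⟩
  filter_upwards [hpos] with x hx
  refine ⟨mul_nonneg (ApproxAux.cutoff_nonneg n x) hx,
    mul_le_mul_of_nonneg_right (ApproxAux.cutoff_mono n x) hx, ?_⟩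
  calc ApproxAux.cutoff n x * u x ≤ 1 * u x :=
        mul_le_mul_of_nonneg_right (ApproxAux.cutoff_le_one n x) hx
    _ = u x := one_mul _
end
end
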